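/- arXiv:math/0108138 — 2 statements merged into one kernel-verified Lean document; each statement's English description precedes it below -/
import Mathlib

section
/- (Calderón–Zygmund decomposition for size.) Let n ∈ ℤ, let 𝐏_n be a convex collection of lacunary tiles, and let a : 𝐏_n → [0,∞) satisfy ‖a‖_{size*(𝐏_n)} ≤ 2ⁿ. Then there exists a disjoint partition 𝐏_n = ⋃_{T∈𝐓_n} T ∪ 𝐏_{n−1}, where 𝐏_{n−1} is a convex collection of tiles with ‖a‖_{size*(𝐏_{n−1})} ≤ 2^{n−1}, and 𝐓_n is a collection of convex trees with pairwise disjoint spatial intervals I_T such that 2^{n−1} ≤ ‖a‖_{size(T)} ≤ ‖a‖_{size*(T)} ≤ 2ⁿ for every T ∈ 𝐓_n. -/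
open MeasureTheory Set

noncomputable section

namespace Dyadic

/-- A dyadic interval/lacunary tile: `I = [j·2^k, (j+1)·2^k)` with `-M ≤ k ≤ M`,
`I ⊆ [0, 2^M)`.  Lacunary tiles are in bijection with dyadic intervals, so we
identify the tile `P⁺(I) = I × [1/|I|, 2/|I|)` with the data of `I`. -/
structure Tile (M : ℕ) where
  j : ℤ
  k : ℤ
  hk_lb : -(M : ℤ) ≤ k
  hk_ub : k ≤ (M : ℤ)
  hj : 0 ≤ j
  hsub : ((j : ℝ) + 1) * 2 ^ k ≤ 2 ^ (M : ℤ)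

variable {M : ℕ}

/-- The side length `|I_P| = 2^k` of the spatial interval of the tile. -/
def Tile.len (P : Tile M) : ℝ := 2 ^ P.k

/-- The spatial interval `I_P` of the tile. -/
def Tile.ival (P : Tile M) : Set ℝ :=
  Ico ((P.j : ℝ) * 2 ^ P.k) (((P.j : ℝ) + 1) * 2 ^ P.k)

/-- The order `P ≤′ Q` on lacunary tiles: `I_P ⊆ I_Q`. -/
def Tile.le (P Q : Tile M) : Prop := P.ival ⊆ Q.ival

/-- A (lacunary) tree: a collection of tiles together with a top tile. -/
structure Tree (M : ℕ) where
  tiles : Set (Tile M)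
  top : Tile M
  top_mem : top ∈ tiles
  le_top : ∀ P ∈ tiles, P.le top

/-- `|I_T|`, the length of the spatial interval of the top of the tree. -/
def Tree.len (T : Tree M) : ℝ := T.top.len

/-- A collection of tiles is convex if `P₁ ≤′ P ≤′ P₂` with `P₁, P₂` in the
collection implies `P` is in the collection. -/
def IsConvex (PP : Set (Tile M)) : Prop :=
  ∀ P₁ ∈ PP, ∀ P₂ ∈ PP, ∀ P : Tile M, P₁.le P → P.le P₂ → P ∈ PP

/-- The size `‖a‖_{size(T)} = (1/|I_T|) Σ_{P ∈ T} a(P)` of `a` on a tree `T`. -/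
def treeSize (a : Tile M → ℝ) (T : Tree M) : ℝ :=
  (∑ᶠ P ∈ T.tiles, a P) / T.len

/-- The maximal size `‖a‖_{size*(PP)}`: the supremum of `‖a‖_{size(T)}` over all
convex trees `T ⊆ PP` (by convention `0` if there are none). -/
def maxSize (a : Tile M → ℝ) (PP : Set (Tile M)) : ℝ :=
  sSup (insert 0 {s : ℝ | ∃ T : Tree M, T.tiles ⊆ PP ∧ IsConvex T.tiles ∧ s = treeSize a T})

/-- The complete tree `Tree(P) = {Q : Q ≤′ P}`. -/
def cTree (P : Tile M) : Set (Tile M) := {Q : Tile M | Q.le P}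

/-- A tree `T` is complete with respect to `PP` if `T = Tree(P_T) ∩ PP`. -/
def Tree.IsCompleteIn (T : Tree M) (PP : Set (Tile M)) : Prop :=
  T.tiles = cTree T.top ∩ PP

/-- `QQ` is an `α`-packing of the tree `T`: `QQ ⊆ T` and `Σ_{P ∈ QQ} |I_P| ≤ α|I_T|`. -/
def IsPacking (α : ℝ) (QQ : Set (Tile M)) (T : Tree M) : Prop :=
  QQ ⊆ T.tiles ∧ (∑ᶠ P ∈ QQ, Tile.len P) ≤ α * T.len

/-- `QQ` is a uniform `α`-packing of the tree `T`:
`Σ_{P ∈ QQ, I_P ⊆ J} |I_P| ≤ α|J|` for every dyadic interval `J`. -/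
def IsUniformPacking (α : ℝ) (QQ : Set (Tile M)) (T : Tree M) : Prop :=
  QQ ⊆ T.tiles ∧
    ∀ J : Tile M, (∑ᶠ P ∈ {P ∈ QQ | P.ival ⊆ J.ival}, Tile.len P) ≤ α * J.len

/-- Left half of the spatial interval. -/
def Tile.left (P : Tile M) : Set ℝ :=
  Ico ((P.j : ℝ) * 2 ^ P.k) (((P.j : ℝ) + 1 / 2) * 2 ^ P.k)

/-- Right half of the spatial interval. -/
def Tile.right (P : Tile M) : Set ℝ :=
  Ico (((P.j : ℝ) + 1 / 2) * 2 ^ P.k) (((P.j : ℝ) + 1) * 2 ^ P.k)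

/-- The (mother) Haar wavelet `φ_P = |I_P|^{-1/2}(χ_{I_l} - χ_{I_r})`. -/
def Tile.haar (P : Tile M) : ℝ → ℝ := fun x =>
  (Real.sqrt P.len)⁻¹ * (P.left.indicator 1 x - P.right.indicator 1 x)

/-- The Haar (wavelet) coefficient `Wf(P) = ⟨f, φ_P⟩`. -/
def waveCoeff (f : ℝ → ℝ) (P : Tile M) : ℝ := ∫ x, f x * P.haar x

/-- The average `[f]_{I_P} = (1/|I_P|)∫_{I_P} f`. -/
def tileAvg (f : ℝ → ℝ) (P : Tile M) : ℝ := (∫ x in P.ival, f x) / P.len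

/-- The mean `‖f‖_{mean(P)} = (1/|I_P|)∫_{I_P} |f|`. -/
def tileMean (f : ℝ → ℝ) (P : Tile M) : ℝ := (∫ x in P.ival, |f x|) / P.len

/-- The maximal mean `‖f‖_{mean*(PP)} = sup_{P ∈ PP} ‖f‖_{mean(P)}`. -/
def maxMean (f : ℝ → ℝ) (PP : Set (Tile M)) : ℝ :=
  sSup (insert 0 (tileMean f '' PP))

/-- The dyadic BMO norm `‖f‖_{BMO} = ‖|Wf|²‖_{size*(PP⁺)}^{1/2}`. -/
def bmoNorm (M : ℕ) (f : ℝ → ℝ) : ℝ :=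
  Real.sqrt (maxSize (fun P : Tile M => waveCoeff f P ^ 2) univ)

/-- The grid interval `[j·2^{-M}, (j+1)·2^{-M})` at the finest scale. -/
def gridIval (M : ℕ) (j : ℤ) : Set ℝ :=
  Ico ((j : ℝ) * 2 ^ (-(M : ℤ))) (((j : ℝ) + 1) * 2 ^ (-(M : ℤ)))

/-- A dyadic test function: supported on `[0, 2^M)` and constant on every dyadic
interval of length `2^{-M}`. -/
def IsTestFun (M : ℕ) (f : ℝ → ℝ) : Prop :=
  (∀ x : ℝ, x ∉ Ico (0 : ℝ) (2 ^ (M : ℤ)) → f x = 0) ∧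
    ∀ j : ℤ, ∀ x ∈ gridIval M j, ∀ y ∈ gridIval M j, f x = f y

/-- The `L²` norm. -/
def l2Norm (f : ℝ → ℝ) : ℝ := Real.sqrt (∫ x, f x ^ 2)

/-- The `L^∞` norm (as a supremum of values; adequate for test functions). -/
def supNorm (f : ℝ → ℝ) : ℝ := ⨆ x : ℝ, |f x|

/-- The weak `L^r` quasinorm `sup_{λ>0} λ |{|h| ≥ λ}|^{1/r}`. -/
def weakNorm (r : ℝ) (h : ℝ → ℝ) : ℝ :=
  sSup {s : ℝ | ∃ l : ℝ, 0 < l ∧ s = l * (volume {x : ℝ | l ≤ |h x|}).toReal ^ (1 / r)}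

/-- The phase space projection `Π_T f = Σ_{P ∈ T} ⟨f, φ_P⟩ φ_P` onto a tree. -/
def treeProj (T : Tree M) (f : ℝ → ℝ) : ℝ → ℝ := fun x =>
  ∑ᶠ P ∈ T.tiles, waveCoeff f P * P.haar x

/-- The high-low paraproduct `π_hl(f,g) = Σ_P Wf(P) [g]_P φ_P`. -/
def paraHL (M : ℕ) (f g : ℝ → ℝ) : ℝ → ℝ := fun x =>
  ∑ᶠ P : Tile M, waveCoeff f P * tileAvg g P * P.haar x

/-- The low-high paraproduct `π_lh(f,g) = Σ_P [f]_P Wg(P) φ_P`. -/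
def paraLH (M : ℕ) (f g : ℝ → ℝ) : ℝ → ℝ := fun x =>
  ∑ᶠ P : Tile M, tileAvg f P * waveCoeff g P * P.haar x

/-- The high-high paraproduct `π_hh(f,g) = Σ_P Wf(P) Wg(P) χ_{I_P}/|I_P|`. -/
def paraHH (M : ℕ) (f g : ℝ → ℝ) : ℝ → ℝ := fun x =>
  ∑ᶠ P : Tile M, waveCoeff f P * waveCoeff g P * P.ival.indicator 1 x / P.len

/-- The constant function `1` on `[0, 2^M)`. -/
def oneFn (M : ℕ) : ℝ → ℝ := (Ico (0 : ℝ) (2 ^ (M : ℤ))).indicator 1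

/-- A perfect dyadic Calderón–Zygmund operator, recorded via its kernel `K` and
kernel constant `A₀`. -/
structure PDCZ (M : ℕ) where
  K : ℝ → ℝ → ℝ
  A₀ : ℝ
  hA₀ : 0 < A₀
  meas : Measurable (Function.uncurry K)
  bound : ∀ x y : ℝ, x ≠ y → |K x y| ≤ A₀ / |x - y|
  perfectX : ∀ I J : Tile M, Disjoint I.ival J.ival →
    ∀ x ∈ I.ival, ∀ x' ∈ I.ival, ∀ y ∈ J.ival, K x y = K x' y
  perfectY : ∀ I J : Tile M, Disjoint I.ival J.ival →
    ∀ x ∈ I.ival, ∀ x' ∈ I.ival, ∀ y ∈ J.ival, K y x = K y x'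
  diag : ∀ I : Tile M, I.k = -(M : ℤ) → ∀ x ∈ I.ival, ∀ y ∈ I.ival, K x y = 0
  corner₁ : ∀ x ∈ Ico (0 : ℝ) (2 ^ ((M : ℤ) - 1)),
    ∀ y ∈ Ico ((2 : ℝ) ^ ((M : ℤ) - 1)) (2 ^ (M : ℤ)), K x y = 0
  corner₂ : ∀ x ∈ Ico ((2 : ℝ) ^ ((M : ℤ) - 1)) (2 ^ (M : ℤ)),
    ∀ y ∈ Ico (0 : ℝ) (2 ^ ((M : ℤ) - 1)), K x y = 0

/-- `Tf(x) = ∫ K(x,y) f(y) dy`. -/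
def PDCZ.app (Op : PDCZ M) (f : ℝ → ℝ) : ℝ → ℝ := fun x => ∫ y, Op.K x y * f y

/-- The transpose `T*f(x) = ∫ K(y,x) f(y) dy`. -/
def PDCZ.appT (Op : PDCZ M) (f : ℝ → ℝ) : ℝ → ℝ := fun x => ∫ y, Op.K y x * f y

/-- Complex-valued Haar coefficient. -/
def waveCoeffC (b : ℝ → ℂ) (P : Tile M) : ℂ := ∫ x, b x * (P.haar x : ℂ)

/-- Complex-valued average. -/
def tileAvgC (b : ℝ → ℂ) (P : Tile M) : ℂ := (∫ x in P.ival, b x) / (P.len : ℂ)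

/-- BMO norm of a complex-valued function. -/
def bmoNormC (M : ℕ) (b : ℝ → ℂ) : ℝ :=
  Real.sqrt (maxSize (fun P : Tile M => ‖waveCoeffC b P‖ ^ 2) univ)

/-- Complex-valued dyadic test functions. -/
def IsTestFunC (M : ℕ) (b : ℝ → ℂ) : Prop :=
  (∀ x : ℝ, x ∉ Ico (0 : ℝ) (2 ^ (M : ℤ)) → b x = 0) ∧
    ∀ j : ℤ, ∀ x ∈ gridIval M j, ∀ y ∈ gridIval M j, b x = b y

/-- The operator applied to a complex-valued function. -/
def PDCZ.appC (Op : PDCZ M) (b : ℝ → ℂ) : ℝ → ℂ := fun x => ∫ y, (Op.K x y : ℂ) * b y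



section AuxCZ

lemma Tile.len_pos (P : Tile M) : 0 < P.len := by
  unfold Tile.len; positivity

lemma Tile.endpoint_lt (P : Tile M) :
    (P.j : ℝ) * 2 ^ P.k < ((P.j : ℝ) + 1) * 2 ^ P.k := by
  have h : (0:ℝ) < 2 ^ P.k := by positivity
  nlinarith

lemma Tile.ival_nonempty (P : Tile M) : P.ival.Nonempty :=
  Set.nonempty_Ico.mpr P.endpoint_lt

lemma Tile.ext' {P Q : Tile M} (h1 : P.j = Q.j) (h2 : P.k = Q.k) : P = Q := by
  cases P; cases Q; simp_all

lemma Tile.le_rfl' (P : Tile M) : P.le P := subset_rfl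

lemma Tile.le_trans' {P Q R : Tile M} (h1 : P.le Q) (h2 : Q.le R) : P.le R :=
  Set.Subset.trans h1 h2

lemma Tile.le_bounds {P Q : Tile M} (h : P.le Q) :
    (Q.j : ℝ) * 2 ^ Q.k ≤ (P.j : ℝ) * 2 ^ P.k ∧
      ((P.j : ℝ) + 1) * 2 ^ P.k ≤ ((Q.j : ℝ) + 1) * 2 ^ Q.k :=
  (Set.Ico_subset_Ico_iff P.endpoint_lt).mp h

lemma Tile.len_le_of_le {P Q : Tile M} (h : P.le Q) : P.len ≤ Q.len := by
  obtain ⟨h1, h2⟩ := Tile.le_bounds h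
  have e1 : ((P.j:ℝ) + 1) * 2 ^ P.k = (P.j:ℝ) * 2 ^ P.k + 2 ^ P.k := by ring
  have e2 : ((Q.j:ℝ) + 1) * 2 ^ Q.k = (Q.j:ℝ) * 2 ^ Q.k + 2 ^ Q.k := by ring
  unfold Tile.len
  linarith

lemma Tile.eq_of_le_of_len_le {P Q : Tile M} (h : P.le Q) (hl : Q.len ≤ P.len) :
    P = Q := by
  have hm : StrictMono fun m : ℤ => (2:ℝ) ^ m := zpow_right_strictMono₀ one_lt_two
  have hk : P.k = Q.k := hm.injective (le_antisymm (Tile.len_le_of_le h) hl)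
  obtain ⟨h1, h2⟩ := Tile.le_bounds h
  have hc : (0:ℝ) < 2 ^ P.k := by positivity
  rw [← hk] at h1 h2
  have b1 : (Q.j : ℝ) ≤ P.j := le_of_mul_le_mul_right h1 hc
  have b2 : (P.j : ℝ) + 1 ≤ (Q.j : ℝ) + 1 := le_of_mul_le_mul_right h2 hc
  have hj : (P.j : ℝ) = Q.j := le_antisymm (by linarith) b1
  exact Tile.ext' (by exact_mod_cast hj) hk

lemma Tile.le_of_not_disjoint_of_k_le {P Q : Tile M} (hk : P.k ≤ Q.k)
    (hnd : ¬ Disjoint P.ival Q.ival) : P.le Q := by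
  obtain ⟨x, hxP, hxQ⟩ := Set.not_disjoint_iff.mp hnd
  obtain ⟨hxP1, hxP2⟩ := hxP
  obtain ⟨hxQ1, hxQ2⟩ := hxQ
  set dn : ℕ := (Q.k - P.k).toNat with hdn
  have hQk : Q.k = P.k + dn := by
    have := Int.toNat_of_nonneg (sub_nonneg.mpr hk)
    omega
  have hc : (0:ℝ) < 2 ^ P.k := by positivity
  set c : ℝ := 2 ^ P.k with hcdef
  set t : ℝ := ((2 ^ dn : ℤ) : ℝ) with htdef
  have ht : (2:ℝ) ^ Q.k = c * t := by
    rw [hQk, zpow_add₀ (two_ne_zero), htdef, hcdef]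
    push_cast
    rw [zpow_natCast]
  have a1 : (P.j : ℝ) ≤ x / c := (le_div_iff₀ hc).mpr hxP1
  have a2 : x / c < (P.j : ℝ) + 1 := (div_lt_iff₀ hc).mpr hxP2
  have a3 : (Q.j : ℝ) * t ≤ x / c := by
    refine (le_div_iff₀ hc).mpr ?_
    have e : (Q.j:ℝ) * t * c = (Q.j:ℝ) * 2 ^ Q.k := by rw [ht]; ring
    rw [e]; exact hxQ1
  have a4 : x / c < ((Q.j : ℝ) + 1) * t := by
    refine (div_lt_iff₀ hc).mpr ?_
    have e : ((Q.j:ℝ) + 1) * t * c = ((Q.j:ℝ) + 1) * 2 ^ Q.k := by rw [ht]; ring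
    rw [e]; exact hxQ2
  have zi1 : Q.j * 2 ^ dn ≤ P.j := by
    have hr : (Q.j : ℝ) * t < (P.j : ℝ) + 1 := lt_of_le_of_lt a3 a2
    have hz : Q.j * 2 ^ dn < P.j + 1 := by
      rw [htdef] at hr; exact_mod_cast hr
    omega
  have zi2 : P.j + 1 ≤ (Q.j + 1) * 2 ^ dn := by
    have hr : (P.j : ℝ) < ((Q.j : ℝ) + 1) * t := lt_of_le_of_lt a1 a4
    have hz : P.j < (Q.j + 1) * 2 ^ dn := by
      rw [htdef] at hr; exact_mod_cast hr
    omega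
  show P.ival ⊆ Q.ival
  unfold Tile.ival
  apply Set.Ico_subset_Ico
  · calc (Q.j:ℝ) * 2 ^ Q.k = ((Q.j * 2 ^ dn : ℤ) : ℝ) * c := by
          rw [ht, htdef]; push_cast; ring
      _ ≤ (P.j:ℝ) * c := mul_le_mul_of_nonneg_right (by exact_mod_cast zi1) hc.le
      _ = (P.j:ℝ) * 2 ^ P.k := by rw [hcdef]
  · calc ((P.j:ℝ) + 1) * 2 ^ P.k = ((P.j + 1 : ℤ) : ℝ) * c := by
          rw [hcdef]; push_cast; ring
      _ ≤ (((Q.j + 1) * 2 ^ dn : ℤ) : ℝ) * c :=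
          mul_le_mul_of_nonneg_right (by exact_mod_cast zi2) hc.le
      _ = ((Q.j:ℝ) + 1) * 2 ^ Q.k := by rw [ht, htdef]; push_cast; ring

lemma Tile.le_or_le_of_not_disjoint {P Q : Tile M}
    (hnd : ¬ Disjoint P.ival Q.ival) : P.le Q ∨ Q.le P := by
  rcases le_total P.k Q.k with h | h
  · exact Or.inl (Tile.le_of_not_disjoint_of_k_le h hnd)
  · exact Or.inr (Tile.le_of_not_disjoint_of_k_le h fun hd => hnd hd.symm)

lemma Tile.j_le (P : Tile M) : P.j ≤ 2 ^ (2 * M) := by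
  have hc : (0:ℝ) < 2 ^ P.k := by positivity
  have h2 : (P.j:ℝ) + 1 ≤ 2 ^ ((M:ℤ) - P.k) := by
    rw [zpow_sub₀ two_ne_zero]
    exact (le_div_iff₀ hc).mpr P.hsub
  have h3 : (2:ℝ) ^ ((M:ℤ) - P.k) ≤ 2 ^ ((2 * M : ℕ) : ℤ) := by
    refine zpow_le_zpow_right₀ one_le_two ?_
    have := P.hk_lb
    push_cast
    omega
  have h4 : (P.j:ℝ) + 1 ≤ ((2 ^ (2 * M) : ℤ) : ℝ) := by
    push_cast
    rw [← zpow_natCast (2:ℝ) (2 * M)]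
    linarith
  have : P.j + 1 ≤ 2 ^ (2 * M) := by exact_mod_cast h4
  omega

instance : Finite (Tile M) := by
  haveI := (Set.finite_Icc (0:ℤ) (2 ^ (2 * M))).to_subtype
  haveI := (Set.finite_Icc (-(M:ℤ)) (M:ℤ)).to_subtype
  refine Finite.of_injective
    (fun P : Tile M =>
      ((⟨P.j, P.hj, P.j_le⟩ : Set.Icc (0:ℤ) (2 ^ (2 * M))),
        (⟨P.k, P.hk_lb, P.hk_ub⟩ : Set.Icc (-(M:ℤ)) (M:ℤ)))) ?_
  intro P Q h
  simp only [Prod.mk.injEq, Subtype.mk.injEq] at h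
  exact Tile.ext' (congrArg Subtype.val h.1) (congrArg Subtype.val h.2)

lemma Tree.ext' {T T' : Tree M} (h1 : T.tiles = T'.tiles) (h2 : T.top = T'.top) :
    T = T' := by
  cases T; cases T'; simp_all

instance : Finite (Tree M) := by
  refine Finite.of_injective (fun T : Tree M => (T.tiles, T.top)) ?_
  intro T T' h
  simp only [Prod.mk.injEq] at h
  exact Tree.ext' h.1 h.2

lemma finsum_mem_mono' {s t : Set (Tile M)} (hst : s ⊆ t) {f : Tile M → ℝ}
    (hf : ∀ P, 0 ≤ f P) : (∑ᶠ P ∈ s, f P) ≤ ∑ᶠ P ∈ t, f P := by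
  rw [finsum_mem_eq_finite_toFinset_sum f (Set.toFinite s),
    finsum_mem_eq_finite_toFinset_sum f (Set.toFinite t)]
  exact Finset.sum_le_sum_of_subset_of_nonneg
    (Set.Finite.toFinset_subset_toFinset.mpr hst) fun i _ _ => hf i

lemma bddAbove_maxSizeSet (a : Tile M → ℝ) (PP : Set (Tile M)) :
    BddAbove (insert (0:ℝ)
      {s : ℝ | ∃ T : Tree M, T.tiles ⊆ PP ∧ IsConvex T.tiles ∧ s = treeSize a T}) := by
  refine Set.Finite.bddAbove (Set.Finite.insert _ ?_)
  refine Set.Finite.subset (Set.finite_range (treeSize a)) ?_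
  rintro s ⟨T, -, -, rfl⟩
  exact ⟨T, rfl⟩

lemma treeSize_le_maxSize (a : Tile M → ℝ) (T : Tree M) {PP : Set (Tile M)}
    (hsub : T.tiles ⊆ PP) (hc : IsConvex T.tiles) : treeSize a T ≤ maxSize a PP :=
  le_csSup (bddAbove_maxSizeSet a PP) (Set.mem_insert_of_mem _ ⟨T, hsub, hc, rfl⟩)

lemma maxSize_le {a : Tile M → ℝ} {PP : Set (Tile M)} {c : ℝ} (hc : 0 ≤ c)
    (h : ∀ T : Tree M, T.tiles ⊆ PP → IsConvex T.tiles → treeSize a T ≤ c) :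
    maxSize a PP ≤ c := by
  refine csSup_le ⟨0, Set.mem_insert _ _⟩ ?_
  rintro b (rfl | ⟨T, h1, h2, rfl⟩)
  · exact hc
  · exact h T h1 h2

lemma maxSize_mono (a : Tile M → ℝ) {PP QQ : Set (Tile M)} (h : PP ⊆ QQ) :
    maxSize a PP ≤ maxSize a QQ := by
  refine csSup_le_csSup (bddAbove_maxSizeSet a QQ) ⟨0, Set.mem_insert _ _⟩ ?_
  refine Set.insert_subset_insert ?_
  rintro s ⟨T, h1, h2, rfl⟩
  exact ⟨T, h1.trans h, h2, rfl⟩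

end AuxCZ

/-- Lemma 5.1: Calderón–Zygmund decomposition for size. -/
theorem statement7 (M : ℕ) (n : ℤ) (PPn : Set (Tile M)) (a : Tile M → ℝ)
    (ha : ∀ P, 0 ≤ a P) (hconv : IsConvex PPn)
    (hsize : maxSize a PPn ≤ 2 ^ n) :
    ∃ (TT : Set (Tree M)) (PP' : Set (Tile M)),
      PPn = (⋃ T ∈ TT, T.tiles) ∪ PP' ∧
      (TT.Pairwise fun T T' => Disjoint T.tiles T'.tiles) ∧
      (∀ T ∈ TT, Disjoint T.tiles PP') ∧
      IsConvex PP' ∧ maxSize a PP' ≤ 2 ^ (n - 1) ∧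
      (∀ T ∈ TT, T.tiles ⊆ PPn ∧ IsConvex T.tiles) ∧
      (TT.Pairwise fun T T' => Disjoint T.top.ival T'.top.ival) ∧
      (∀ T ∈ TT, (2 : ℝ) ^ (n - 1) ≤ treeSize a T ∧
        treeSize a T ≤ maxSize a T.tiles ∧ maxSize a T.tiles ≤ 2 ^ n) := by
  classical
  set size0 : Tile M → ℝ := fun P => (∑ᶠ Q ∈ cTree P ∩ PPn, a Q) / P.len with hsize0
  set S : Set (Tile M) := {P | P ∈ PPn ∧ (2:ℝ) ^ (n - 1) ≤ size0 P} with hS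
  set Tops : Set (Tile M) := {P | P ∈ S ∧ ∀ R ∈ S, P.le R → P = R} with hTops
  set TT : Set (Tree M) := {T | T.top ∈ Tops ∧ T.tiles = cTree T.top ∩ PPn} with hTT
  set U : Set (Tile M) := ⋃ T ∈ TT, T.tiles with hU
  set PP' : Set (Tile M) := PPn \ U with hPP'
  have hcconv : ∀ P : Tile M, IsConvex (cTree P ∩ PPn) := by
    intro P P1 h1 P2 h2 R hl1 hl2
    exact ⟨Tile.le_trans' hl2 h2.1, hconv P1 h1.2 P2 h2.2 R hl1 hl2⟩
  have hmkT : ∀ P ∈ Tops, ∃ T ∈ TT, T.tiles = cTree P ∩ PPn ∧ T.top = P := by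
    intro P hP
    refine ⟨⟨cTree P ∩ PPn, P, ⟨Tile.le_rfl' P, hP.1.1⟩, fun Q hQ => hQ.1⟩, ⟨hP, rfl⟩,
      rfl, rfl⟩
  have hUsub : U ⊆ PPn := by
    rw [hU]
    refine Set.iUnion₂_subset ?_
    intro T hT
    rw [hT.2]
    exact Set.inter_subset_right
  have hSmax : ∀ Q ∈ S, ∃ P ∈ Tops, Q.le P := by
    intro Q hQ
    obtain ⟨P, hPs, hmax⟩ := Set.Finite.exists_maximalFor
      Tile.len _ (Set.toFinite {P | P ∈ S ∧ Q.le P}) ⟨Q, hQ, Tile.le_rfl' Q⟩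
    refine ⟨P, ⟨hPs.1, ?_⟩, hPs.2⟩
    intro R hR hle
    have hRs : R ∈ {P | P ∈ S ∧ Q.le P} := ⟨hR, Tile.le_trans' hPs.2 hle⟩
    exact Tile.eq_of_le_of_len_le hle (hmax hRs (Tile.len_le_of_le hle))
  have hQnotS : ∀ Q ∈ PP', Q ∉ S := by
    intro Q hQ hQS
    obtain ⟨P, hP, hle⟩ := hSmax Q hQS
    obtain ⟨T, hT, hTt, -⟩ := hmkT P hP
    have : Q ∈ U := Set.mem_biUnion hT (by rw [hTt]; exact ⟨hle, hQ.1⟩)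
    exact hQ.2 this
  have htopdisj : ∀ T ∈ TT, ∀ T' ∈ TT, T.top ≠ T'.top →
      Disjoint T.top.ival T'.top.ival := by
    intro T hT T' hT' hne
    by_contra hnd
    rcases Tile.le_or_le_of_not_disjoint hnd with h | h
    · exact hne (hT.1.2 T'.top hT'.1.1 h)
    · exact hne (hT'.1.2 T.top hT.1.1 h).symm
  have htopne : ∀ T ∈ TT, ∀ T' ∈ TT, T ≠ T' → T.top ≠ T'.top := by
    intro T hT T' hT' hne heq
    exact hne (Tree.ext' (by rw [hT.2, hT'.2, heq]) heq)
  refine ⟨TT, PP', (Set.union_diff_cancel hUsub).symm, ?_, ?_, ?_, ?_, ?_, ?_, ?_⟩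
  · -- pairwise tiles disjoint
    intro T hT T' hT' hne
    have hd := htopdisj T hT T' hT' (htopne T hT T' hT' hne)
    rw [Set.disjoint_left]
    intro Q hQT hQT'
    have h1 : Q.ival ⊆ T.top.ival := by
      rw [hT.2] at hQT; exact hQT.1
    have h2 : Q.ival ⊆ T'.top.ival := by
      rw [hT'.2] at hQT'; exact hQT'.1
    obtain ⟨x, hx⟩ := Q.ival_nonempty
    exact Set.disjoint_left.mp hd (h1 hx) (h2 hx)
  · -- trees disjoint from PP'
    intro T hT
    rw [Set.disjoint_left]
    intro Q hQT hQ'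
    exact hQ'.2 (Set.mem_biUnion hT hQT)
  · -- PP' convex
    intro P1 h1 P2 h2 P hl1 hl2
    have hPn : P ∈ PPn := hconv P1 h1.1 P2 h2.1 P hl1 hl2
    refine ⟨hPn, fun hUm => ?_⟩
    obtain ⟨T, hT, hPT⟩ := Set.mem_iUnion₂.mp hUm
    rw [hT.2] at hPT
    have : P1 ∈ U := Set.mem_biUnion hT
      (by rw [hT.2]; exact ⟨Tile.le_trans' hl1 hPT.1, h1.1⟩)
    exact h1.2 this
  · -- maxSize PP' ≤ 2^(n-1)
    refine maxSize_le (by positivity) ?_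
    intro T' h1' h2'
    set Q := T'.top with hQdef
    have hQ' : Q ∈ PP' := h1' T'.top_mem
    have hlt : size0 Q < 2 ^ (n - 1) := by
      by_contra hge
      exact hQnotS Q hQ' ⟨hQ'.1, le_of_not_gt hge⟩
    have hsubQ : T'.tiles ⊆ cTree Q ∩ PPn := by
      intro R hR
      exact ⟨T'.le_top R hR, (h1' hR).1⟩
    have hnum : (∑ᶠ P ∈ T'.tiles, a P) ≤ ∑ᶠ P ∈ cTree Q ∩ PPn, a P :=
      finsum_mem_mono' hsubQ ha
    have hts : treeSize a T' ≤ size0 Q := by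
      rw [hsize0]
      unfold treeSize Tree.len
      exact (div_le_div_iff_of_pos_right Q.len_pos).mpr hnum
    linarith
  · -- subsets and convexity of trees
    intro T hT
    constructor
    · rw [hT.2]; exact Set.inter_subset_right
    · rw [hT.2]; exact hcconv T.top
  · -- pairwise top ival disjoint
    intro T hT T' hT' hne
    exact htopdisj T hT T' hT' (htopne T hT T' hT' hne)
  · -- size bounds
    intro T hT
    have hTsub : T.tiles ⊆ PPn := by rw [hT.2]; exact Set.inter_subset_right
    have heq : treeSize a T = size0 T.top := by
      rw [hsize0]
      unfold treeSize Tree.len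
      rw [hT.2]
    refine ⟨?_, ?_, ?_⟩
    · rw [heq]; exact hT.1.1.2
    · exact treeSize_le_maxSize a T subset_rfl (by rw [hT.2]; exact hcconv T.top)
    · exact (maxSize_mono a hTsub).trans hsize


end Dyadic
end
end

section
/- (L² × BMO → L² paraproduct estimates.) For all dyadic test functions f, g ∈ S one has ‖π_hl(f,g)‖_{L²} ≤ C‖f‖_{L²}‖g‖_{L^∞}, and ‖π_hh(f,g)‖_{L²} ≤ C‖f‖_{L²}‖g‖_{BMO} and ‖π_lh(f,g)‖_{L²} ≤ C‖f‖_{L²}‖g‖_{BMO}, with an absolute constant C. -/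
open MeasureTheory Set

noncomputable section

namespace Dyadic

variable {M : ℕ}

/-! ### Part 1: tile combinatorics -/

open scoped Classical

namespace Tile

lemma two_zpow_pos (k : ℤ) : (0:ℝ) < 2 ^ k := by positivity

variable (P Q : Tile M)

lemma len_pos_s11 : 0 < P.len := two_zpow_pos _

lemma lt_upper : (P.j : ℝ) * 2 ^ P.k < ((P.j : ℝ) + 1) * 2 ^ P.k :=
  mul_lt_mul_of_pos_right (lt_add_one _) (two_zpow_pos _)

lemma ival_nonempty_s11 : P.ival.Nonempty := Set.nonempty_Ico.2 P.lt_upper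

lemma measurableSet_ival : MeasurableSet P.ival := measurableSet_Ico

lemma volume_ival : volume P.ival = ENNReal.ofReal P.len := by
  rw [Tile.ival, Real.volume_Ico]
  congr 1
  rw [Tile.len]; ring

lemma volume_ival_toReal : (volume P.ival).toReal = P.len := by
  rw [volume_ival, ENNReal.toReal_ofReal P.len_pos_s11.le]

lemma ival_subset_base : P.ival ⊆ Ico (0:ℝ) (2 ^ (M:ℤ)) := by
  intro x hx
  obtain ⟨h1, h2⟩ := hx
  constructor
  · have : (0:ℝ) ≤ (P.j : ℝ) * 2 ^ P.k := by
      have : (0:ℝ) ≤ (P.j : ℝ) := by exact_mod_cast P.hj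
      positivity
    linarith
  · exact lt_of_lt_of_le h2 P.hsub

lemma ext'_s11 {P Q : Tile M} (hj : P.j = Q.j) (hk : P.k = Q.k) : P = Q := by
  cases P; cases Q; simp_all

lemma le_refl : P.le P := fun x hx => hx

lemma le_iff {P Q : Tile M} : P.le Q ↔
    (Q.j : ℝ) * 2 ^ Q.k ≤ (P.j : ℝ) * 2 ^ P.k ∧
      ((P.j : ℝ) + 1) * 2 ^ P.k ≤ ((Q.j : ℝ) + 1) * 2 ^ Q.k := by
  rw [Tile.le, Tile.ival, Tile.ival, Set.Ico_subset_Ico_iff P.lt_upper]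

lemma zpow_split {k l : ℤ} (h : k ≤ l) :
    (2:ℝ) ^ l = ((2 ^ (l - k).toNat : ℤ) : ℝ) * 2 ^ k := by
  push_cast
  rw [← zpow_natCast (2:ℝ) (l-k).toNat, Int.toNat_of_nonneg (by omega), ← zpow_add₀ (two_ne_zero) (l-k) k]
  congr 1; omega

lemma le_or_disjoint {P Q : Tile M} (hk : P.k ≤ Q.k) :
    P.le Q ∨ Disjoint P.ival Q.ival := by
  set n : ℤ := 2 ^ (Q.k - P.k).toNat with hn
  have hsplit : (2:ℝ) ^ Q.k = (n : ℝ) * 2 ^ P.k := zpow_split hk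
  have hpos := two_zpow_pos P.k
  rcases le_or_gt ((Q.j + 1) * n) P.j with h | h
  · right
    rw [Tile.ival, Tile.ival, Set.Ico_disjoint_Ico]
    have : ((Q.j:ℝ) + 1) * 2 ^ Q.k ≤ (P.j : ℝ) * 2 ^ P.k := by
      rw [hsplit, ← _root_.mul_assoc]
      apply mul_le_mul_of_nonneg_right _ hpos.le
      exact_mod_cast h
    exact le_trans (min_le_right _ _) (le_trans this (le_max_left _ _))
  rcases le_or_gt (P.j + 1) (Q.j * n) with h2 | h2
  · right
    rw [Tile.ival, Tile.ival, Set.Ico_disjoint_Ico]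
    have : ((P.j:ℝ) + 1) * 2 ^ P.k ≤ (Q.j : ℝ) * 2 ^ Q.k := by
      rw [hsplit, ← _root_.mul_assoc]
      have : ((P.j:ℝ) + 1) ≤ (Q.j : ℝ) * n := by exact_mod_cast h2
      nlinarith
    exact le_trans (min_le_left _ _) (le_trans this (le_max_right _ _))
  · left
    rw [le_iff]
    have hq : Q.j * n ≤ P.j := by omega
    have hp : P.j + 1 ≤ (Q.j + 1) * n := by omega
    constructor
    · rw [hsplit, ← _root_.mul_assoc]
      apply mul_le_mul_of_nonneg_right _ hpos.le
      exact_mod_cast hq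
    · rw [hsplit, ← _root_.mul_assoc]
      apply mul_le_mul_of_nonneg_right _ hpos.le
      exact_mod_cast hp

lemma len_le_of_le_s11 {P Q : Tile M} (h : P.le Q) : P.len ≤ Q.len := by
  rw [le_iff] at h
  rw [Tile.len, Tile.len]
  nlinarith [h.1, h.2]

lemma k_le_of_le {P Q : Tile M} (h : P.le Q) : P.k ≤ Q.k := by
  have := len_le_of_le_s11 h
  rw [Tile.len, Tile.len] at this
  exact (zpow_le_zpow_iff_right₀ (one_lt_two)).1 this

lemma eq_of_le_of_k_le {P Q : Tile M} (h : P.le Q) (hk : Q.k ≤ P.k) : P = Q := by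
  have hk' : P.k = Q.k := le_antisymm (k_le_of_le h) hk
  rw [le_iff] at h
  rw [hk'] at h
  have hpos := two_zpow_pos Q.k
  have h1 : (Q.j : ℝ) ≤ P.j := le_of_mul_le_mul_right h.1 hpos
  have h2 : (P.j : ℝ) + 1 ≤ (Q.j : ℝ) + 1 := le_of_mul_le_mul_right h.2 hpos
  have : P.j = Q.j := by
    have h1' : Q.j ≤ P.j := by exact_mod_cast h1
    have h2' : (P.j : ℝ) ≤ Q.j := by linarith
    have h2'' : P.j ≤ Q.j := by exact_mod_cast h2'
    omega
  exact ext'_s11 this hk'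

lemma k_lt_of_le_ne {P Q : Tile M} (h : P.le Q) (hne : P ≠ Q) : P.k < Q.k := by
  rcases lt_or_ge P.k Q.k with h' | h'
  · exact h'
  · exact absurd (eq_of_le_of_k_le h h') hne

lemma left_eq : P.left = Ico ((P.j : ℝ) * 2 ^ P.k) (((2 * P.j : ℤ) + 1 : ℝ) * 2 ^ (P.k - 1)) := by
  rw [Tile.left]
  congr 1
  rw [zpow_sub_one₀ (two_ne_zero : (2:ℝ) ≠ 0)]
  push_cast; ring

lemma right_eq : P.right = Ico (((2 * P.j : ℤ) + 1 : ℝ) * 2 ^ (P.k - 1)) (((P.j : ℝ) + 1) * 2 ^ P.k) := by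
  rw [Tile.right]
  congr 1
  rw [zpow_sub_one₀ (two_ne_zero : (2:ℝ) ≠ 0)]
  push_cast; ring

lemma mid_mem : (P.j : ℝ) * 2 ^ P.k ≤ ((P.j : ℝ) + 1/2) * 2 ^ P.k ∧
    ((P.j : ℝ) + 1/2) * 2 ^ P.k ≤ ((P.j : ℝ) + 1) * 2 ^ P.k := by
  have := two_zpow_pos P.k
  constructor <;> nlinarith

lemma left_union_right : P.left ∪ P.right = P.ival := by
  rw [Tile.left, Tile.right, Tile.ival]
  exact Set.Ico_union_Ico_eq_Ico P.mid_mem.1 P.mid_mem.2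

lemma disjoint_left_right : Disjoint P.left P.right := Set.Ico_disjoint_Ico_same

lemma left_subset : P.left ⊆ P.ival := by
  rw [← left_union_right]; exact Set.subset_union_left

lemma right_subset : P.right ⊆ P.ival := by
  rw [← left_union_right]; exact Set.subset_union_right

lemma measurableSet_left : MeasurableSet P.left := measurableSet_Ico
lemma measurableSet_right : MeasurableSet P.right := measurableSet_Ico

lemma volume_left : volume P.left = ENNReal.ofReal (P.len / 2) := by
  rw [Tile.left, Real.volume_Ico]
  congr 1; rw [Tile.len]; ring

lemma volume_right : volume P.right = ENNReal.ofReal (P.len / 2) := by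
  rw [Tile.right, Real.volume_Ico]
  congr 1; rw [Tile.len]; ring

/-- The subinterval relation forces landing in a half. -/
lemma le_left_or_le_right {P Q : Tile M} (h : P.le Q) (hk : P.k < Q.k) :
    P.ival ⊆ Q.left ∨ P.ival ⊆ Q.right := by
  have hk1 : P.k ≤ Q.k - 1 := by omega
  set n : ℤ := 2 ^ (Q.k - 1 - P.k).toNat with hn
  have hsplit : (2:ℝ) ^ (Q.k - 1) = (n : ℝ) * 2 ^ P.k := zpow_split hk1
  have hpos := two_zpow_pos P.k
  rw [le_iff] at h
  rcases le_or_gt (P.j + 1) ((2 * Q.j + 1) * n) with h1 | h1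
  · left
    rw [left_eq, Tile.ival, Set.Ico_subset_Ico_iff P.lt_upper]
    refine ⟨h.1, ?_⟩
    rw [hsplit, ← _root_.mul_assoc]
    apply mul_le_mul_of_nonneg_right _ hpos.le
    exact_mod_cast h1
  · right
    rw [right_eq, Tile.ival, Set.Ico_subset_Ico_iff P.lt_upper]
    refine ⟨?_, h.2⟩
    have h1' : (2 * Q.j + 1) * n ≤ P.j := by omega
    rw [hsplit, ← _root_.mul_assoc]
    apply mul_le_mul_of_nonneg_right _ hpos.le
    exact_mod_cast h1'

/-- The left child tile. -/
def childL (P : Tile M) (h : -(M:ℤ) < P.k) : Tile M where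
  j := 2 * P.j
  k := P.k - 1
  hk_lb := by omega
  hk_ub := by have := P.hk_ub; omega
  hj := by have := P.hj; omega
  hsub := by
    have h2 : ((2 * P.j : ℤ) + 1 : ℝ) * 2 ^ (P.k - 1) ≤ ((P.j : ℝ) + 1) * 2 ^ P.k := by
      rw [zpow_sub_one₀ (two_ne_zero : (2:ℝ) ≠ 0)]
      have := two_zpow_pos P.k
      push_cast
      nlinarith
    calc (((2 * P.j : ℤ) : ℝ) + 1) * 2 ^ (P.k - 1) ≤ ((P.j : ℝ) + 1) * 2 ^ P.k := by exact_mod_cast h2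
    _ ≤ 2 ^ (M:ℤ) := P.hsub

/-- The right child tile. -/
def childR (P : Tile M) (h : -(M:ℤ) < P.k) : Tile M where
  j := 2 * P.j + 1
  k := P.k - 1
  hk_lb := by omega
  hk_ub := by have := P.hk_ub; omega
  hj := by have := P.hj; omega
  hsub := by
    have h2 : ((2 * P.j : ℤ) + 2 : ℝ) * 2 ^ (P.k - 1) = ((P.j : ℝ) + 1) * 2 ^ P.k := by
      rw [zpow_sub_one₀ (two_ne_zero : (2:ℝ) ≠ 0)]
      push_cast; ring
    calc (((2 * P.j + 1 : ℤ) : ℝ) + 1) * 2 ^ (P.k - 1)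
        = ((2 * P.j : ℤ) + 2 : ℝ) * 2 ^ (P.k - 1) := by push_cast; ring
    _ = ((P.j : ℝ) + 1) * 2 ^ P.k := h2
    _ ≤ 2 ^ (M:ℤ) := P.hsub

lemma zpow_pred (k : ℤ) : (2:ℝ) ^ (k - 1) = 2 ^ k / 2 := by
  rw [zpow_sub_one₀ (two_ne_zero : (2:ℝ) ≠ 0)]; ring

lemma childL_ival (h : -(M:ℤ) < P.k) : (P.childL h).ival = P.left := by
  rw [Tile.ival, Tile.left, childL, zpow_pred]
  push_cast
  congr 1 <;> ring

lemma childR_ival (h : -(M:ℤ) < P.k) : (P.childR h).ival = P.right := by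
  rw [Tile.ival, Tile.right, childR, zpow_pred]
  push_cast
  congr 1 <;> ring

lemma childL_k (h : -(M:ℤ) < P.k) : (P.childL h).k = P.k - 1 := rfl
lemma childR_k (h : -(M:ℤ) < P.k) : (P.childR h).k = P.k - 1 := rfl

lemma childL_len (h : -(M:ℤ) < P.k) : (P.childL h).len = P.len / 2 := by
  rw [Tile.len, Tile.len, childL, zpow_pred]

lemma childR_len (h : -(M:ℤ) < P.k) : (P.childR h).len = P.len / 2 := by
  rw [Tile.len, Tile.len, childR, zpow_pred]

end Tile

/-- The top tile `[0, 2^M)`. -/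
def topTile (M : ℕ) : Tile M where
  j := 0
  k := (M : ℤ)
  hk_lb := by omega
  hk_ub := le_refl _
  hj := le_refl _
  hsub := by norm_num

lemma topTile_ival : (topTile M).ival = Ico (0:ℝ) (2 ^ (M:ℤ)) := by
  rw [Tile.ival, topTile]; norm_num

lemma le_topTile (P : Tile M) : P.le (topTile M) := by
  rw [Tile.le, topTile_ival]; exact P.ival_subset_base

lemma topTile_len : (topTile M).len = 2 ^ (M:ℤ) := rfl

instance inst_s11 : Finite (Tile M) := by
  have hbound : ∀ P : Tile M, P.j ∈ Finset.Icc (0:ℤ) (2 ^ (2*M)) ∧ P.k ∈ Finset.Icc (-(M:ℤ)) (M:ℤ) := by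
    intro P
    refine ⟨Finset.mem_Icc.2 ⟨P.hj, ?_⟩, Finset.mem_Icc.2 ⟨P.hk_lb, P.hk_ub⟩⟩
    have h1 : ((P.j : ℝ) + 1) * 2 ^ (-(M:ℤ)) ≤ ((P.j : ℝ) + 1) * 2 ^ P.k := by
      have hjr : (0:ℝ) ≤ (P.j : ℝ) := by exact_mod_cast P.hj
      apply mul_le_mul_of_nonneg_left _ (by linarith)
      exact zpow_le_zpow_right₀ (one_le_two) P.hk_lb
    have h2 : ((P.j : ℝ) + 1) * 2 ^ (-(M:ℤ)) ≤ 2 ^ (M:ℤ) := le_trans h1 P.hsub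
    have h3 : ((P.j : ℝ) + 1) ≤ 2 ^ (M:ℤ) * 2 ^ (M:ℤ) := by
      have hp : (0:ℝ) < 2 ^ (-(M:ℤ)) := by positivity
      have := (le_div_iff₀ hp).2 h2
      calc ((P.j : ℝ) + 1) ≤ 2 ^ (M:ℤ) / 2 ^ (-(M:ℤ)) := this
      _ = 2 ^ (M:ℤ) * 2 ^ (M:ℤ) := by
        rw [div_eq_mul_inv, ← zpow_neg]; norm_num
    have h4 : ((P.j : ℝ) + 1) ≤ ((2 ^ (2*M) : ℤ) : ℝ) := by
      refine le_trans h3 ?_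
      push_cast
      rw [← zpow_natCast (2:ℝ) (2*M), ← zpow_add₀ (two_ne_zero : (2:ℝ) ≠ 0)]
      apply le_of_eq; congr 1; push_cast; ring
    have : (P.j : ℝ) < ((2 ^ (2*M) : ℤ) : ℝ) := by linarith
    exact_mod_cast le_of_lt this
  let F : Tile M → ↥(Finset.Icc (0:ℤ) (2 ^ (2*M))) × ↥(Finset.Icc (-(M:ℤ)) (M:ℤ)) :=
    fun P => (⟨P.j, (hbound P).1⟩, ⟨P.k, (hbound P).2⟩)
  have hinj : Function.Injective F := by
    intro P Q h
    have hj : P.j = Q.j := congrArg (fun x => (x.1 : ℤ)) h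
    have hk : P.k = Q.k := congrArg (fun x => (x.2 : ℤ)) h
    exact Tile.ext'_s11 hj hk
  exact Finite.of_injective F hinj

noncomputable instance : Fintype (Tile M) := Fintype.ofFinite _

/-! ### Part 2: tiles under a tile, partition -/

/-- All tiles below a given tile. -/
def tilesUnder (J : Tile M) : Finset (Tile M) := Finset.univ.filter (fun P => P.le J)

lemma mem_tilesUnder {P J : Tile M} : P ∈ tilesUnder J ↔ P.le J := by
  simp [tilesUnder]

lemma tilesUnder_topTile : tilesUnder (topTile M) = Finset.univ := by
  ext P; simp [mem_tilesUnder, le_topTile]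

lemma self_mem_tilesUnder (J : Tile M) : J ∈ tilesUnder J :=
  mem_tilesUnder.2 (Tile.le_refl J)

lemma tilesUnder_base {J : Tile M} (h : J.k = -(M:ℤ)) : tilesUnder J = {J} := by
  ext P
  rw [mem_tilesUnder, Finset.mem_singleton]
  constructor
  · intro hP
    rcases eq_or_ne P J with h' | h'
    · exact h'
    · exact absurd (Tile.k_lt_of_le_ne hP h') (by have := P.hk_lb; omega)
  · rintro rfl; exact Tile.le_refl _

lemma le_child_iff {P J : Tile M} (h : -(M:ℤ) < J.k) :
    P.le J ↔ P = J ∨ P.le (J.childL h) ∨ P.le (J.childR h) := by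
  constructor
  · intro hP
    rcases eq_or_ne P J with h' | h'
    · exact Or.inl h'
    · rcases Tile.le_left_or_le_right hP (Tile.k_lt_of_le_ne hP h') with hl | hr
      · exact Or.inr (Or.inl (by rw [Tile.le, Tile.childL_ival]; exact hl))
      · exact Or.inr (Or.inr (by rw [Tile.le, Tile.childR_ival]; exact hr))
  · rintro (rfl | hL | hR)
    · exact Tile.le_refl P
    · rw [Tile.le, Tile.childL_ival] at hL
      exact fun x hx => J.left_subset (hL hx)
    · rw [Tile.le, Tile.childR_ival] at hR
      exact fun x hx => J.right_subset (hR hx)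

lemma not_le_both {P J : Tile M} (h : -(M:ℤ) < J.k) :
    ¬ (P.le (J.childL h) ∧ P.le (J.childR h)) := by
  rintro ⟨hL, hR⟩
  rw [Tile.le, Tile.childL_ival] at hL
  rw [Tile.le, Tile.childR_ival] at hR
  obtain ⟨x, hx⟩ := P.ival_nonempty_s11
  exact Set.disjoint_left.1 J.disjoint_left_right (hL hx) (hR hx)

lemma top_not_le_child {J : Tile M} (h : -(M:ℤ) < J.k) :
    ¬ J.le (J.childL h) ∧ ¬ J.le (J.childR h) := by
  constructor <;> intro hle <;> have := Tile.k_le_of_le hle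
  · rw [Tile.childL_k] at this; omega
  · rw [Tile.childR_k] at this; omega

lemma tilesUnder_split {J : Tile M} (h : -(M:ℤ) < J.k) :
    tilesUnder J = insert J (tilesUnder (J.childL h) ∪ tilesUnder (J.childR h)) := by
  ext P
  simp only [mem_tilesUnder, Finset.mem_insert, Finset.mem_union]
  exact le_child_iff h

lemma sum_tilesUnder_split (u : Tile M → ℝ) {J : Tile M} (h : -(M:ℤ) < J.k) :
    ∑ P ∈ tilesUnder J, u P =
      u J + ∑ P ∈ tilesUnder (J.childL h), u P + ∑ P ∈ tilesUnder (J.childR h), u P := by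
  rw [tilesUnder_split h, Finset.sum_insert, Finset.sum_union]
  · ring
  · rw [Finset.disjoint_left]
    intro P hP hP'
    exact not_le_both h ⟨mem_tilesUnder.1 hP, mem_tilesUnder.1 hP'⟩
  · rw [Finset.mem_union]
    rintro (hc | hc)
    · exact (top_not_le_child h).1 (mem_tilesUnder.1 hc)
    · exact (top_not_le_child h).2 (mem_tilesUnder.1 hc)

/-! ### Part 3: nice functions -/

/-- Bounded measurable functions. -/
def Nice (f : ℝ → ℝ) : Prop := Measurable f ∧ ∃ B : ℝ, ∀ x, |f x| ≤ B

/-- Functions supported on the base interval. -/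
def Supported (M : ℕ) (f : ℝ → ℝ) : Prop := ∀ x ∉ Ico (0:ℝ) (2 ^ (M:ℤ)), f x = 0

lemma Nice.integrableOn {f : ℝ → ℝ} (hf : Nice f) {s : Set ℝ} (hs : volume s ≠ ⊤) :
    IntegrableOn f s := by
  obtain ⟨hm, B, hB⟩ := hf
  exact Measure.integrableOn_of_bounded hs hm.aestronglyMeasurable
    (Filter.Eventually.of_forall fun x => by simpa [Real.norm_eq_abs] using hB x)

lemma Nice.integrableOn_ival {f : ℝ → ℝ} (hf : Nice f) (P : Tile M) :
    IntegrableOn f P.ival := by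
  apply hf.integrableOn
  rw [P.volume_ival]; exact ENNReal.ofReal_ne_top

lemma Nice.integrable {f : ℝ → ℝ} (hf : Nice f) (hsupp : Supported M f) :
    Integrable f := by
  have hfi : f = (Ico (0:ℝ) (2 ^ (M:ℤ))).indicator f := by
    funext x
    by_cases h : x ∈ Ico (0:ℝ) (2 ^ (M:ℤ))
    · rw [Set.indicator_of_mem h]
    · rw [Set.indicator_of_notMem h, hsupp x h]
  rw [hfi]
  rw [integrable_indicator_iff measurableSet_Ico]
  exact hf.integrableOn (by rw [Real.volume_Ico]; exact ENNReal.ofReal_ne_top)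

lemma Supported.integral_eq {f : ℝ → ℝ} (hsupp : Supported M f) :
    ∫ x in Ico (0:ℝ) (2 ^ (M:ℤ)), f x = ∫ x, f x :=
  setIntegral_eq_integral_of_forall_compl_eq_zero hsupp

lemma Nice.zero : Nice (fun _ : ℝ => (0:ℝ)) :=
  ⟨measurable_const, 0, fun x => by simp⟩

lemma Nice.add {f g : ℝ → ℝ} (hf : Nice f) (hg : Nice g) : Nice (fun x => f x + g x) := by
  obtain ⟨hmf, Bf, hBf⟩ := hf
  obtain ⟨hmg, Bg, hBg⟩ := hg
  exact ⟨hmf.add hmg, Bf + Bg, fun x => (abs_add_le _ _).trans (add_le_add (hBf x) (hBg x))⟩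

lemma Nice.mul {f g : ℝ → ℝ} (hf : Nice f) (hg : Nice g) : Nice (fun x => f x * g x) := by
  obtain ⟨hmf, Bf, hBf⟩ := hf
  obtain ⟨hmg, Bg, hBg⟩ := hg
  refine ⟨hmf.mul hmg, Bf * Bg, fun x => ?_⟩
  rw [abs_mul]
  exact mul_le_mul (hBf x) (hBg x) (abs_nonneg _) ((abs_nonneg _).trans (hBf x))

lemma Nice.const_mul {f : ℝ → ℝ} (hf : Nice f) (c : ℝ) : Nice (fun x => c * f x) := by
  obtain ⟨hmf, Bf, hBf⟩ := hf
  refine ⟨measurable_const.mul hmf, |c| * Bf, fun x => ?_⟩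
  rw [abs_mul]
  exact mul_le_mul_of_nonneg_left (hBf x) (abs_nonneg _)

lemma Nice.finsetSum {ι : Type*} (s : Finset ι) (f : ι → ℝ → ℝ)
    (h : ∀ i ∈ s, Nice (f i)) : Nice (fun x => ∑ i ∈ s, f i x) := by
  classical
  induction s using Finset.induction_on with
  | empty => simpa using Nice.zero
  | insert a s' hni ih =>
    simp only [Finset.sum_insert hni]
    exact (h a (Finset.mem_insert_self a s')).add
      (ih fun i hi => h i (Finset.mem_insert_of_mem hi))

lemma Nice.indicator_one {s : Set ℝ} (hs : MeasurableSet s) :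
    Nice (s.indicator (1 : ℝ → ℝ)) := by
  refine ⟨measurable_const.indicator hs, 1, fun x => ?_⟩
  by_cases h : x ∈ s <;> simp [Set.indicator_of_mem, Set.indicator_of_notMem, h]

/-! ### Part 4: test functions are nice -/

lemma four_pow (M : ℕ) : ((4:ℝ)) ^ M = 2 ^ M * 2 ^ M := by
  rw [show (4:ℝ) = 2 * 2 by norm_num, mul_pow]

lemma mem_gridIval_iff {x : ℝ} {j : ℤ} :
    x ∈ gridIval M j ↔ (j:ℝ) ≤ x * 2 ^ (M:ℤ) ∧ x * 2 ^ (M:ℤ) < (j:ℝ) + 1 := by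
  have hc : (0:ℝ) < 2 ^ (M:ℤ) := by positivity
  rw [gridIval, Set.mem_Ico, zpow_neg, ← div_eq_mul_inv, ← div_eq_mul_inv,
    div_le_iff₀ hc, lt_div_iff₀ hc]

lemma gridIval_subset_base {j : ℤ} (h0 : 0 ≤ j) (h4 : j < 4 ^ M) :
    gridIval M j ⊆ Ico (0:ℝ) (2 ^ (M:ℤ)) := by
  intro x hx
  rw [mem_gridIval_iff] at hx
  have hc : (0:ℝ) < 2 ^ (M:ℤ) := by positivity
  have h2 : (2:ℝ) ^ (M:ℤ) = 2 ^ M := zpow_natCast 2 M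
  have h0' : (0:ℝ) ≤ (j:ℝ) := by exact_mod_cast h0
  have h4' : (j:ℝ) + 1 ≤ ((4:ℝ) ^ M) := by
    have : (j:ℝ) < (4:ℝ) ^ M := by exact_mod_cast h4
    have : (j:ℝ) + 1 ≤ (4:ℝ) ^ M := by
      have hj1 : ((j + 1 : ℤ):ℝ) ≤ (((4:ℤ) ^ M : ℤ):ℝ) := by exact_mod_cast (by omega : j + 1 ≤ (4:ℤ) ^ M)
      push_cast at hj1; linarith
    linarith
  have h44 : ((4:ℝ) ^ M) = 2 ^ (M:ℤ) * 2 ^ (M:ℤ) := by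
    rw [h2]; exact four_pow M
  constructor
  · nlinarith [hx.1]
  · nlinarith [hx.2]

lemma self_mem_gridIval (j : ℤ) : (j:ℝ) * 2 ^ (-(M:ℤ)) ∈ gridIval M j := by
  rw [mem_gridIval_iff]
  have hone : (2:ℝ) ^ (-(M:ℤ)) * 2 ^ (M:ℤ) = 1 := by
    rw [← zpow_add₀ (two_ne_zero : (2:ℝ) ≠ 0)]; norm_num
  constructor
  · rw [_root_.mul_assoc, hone, _root_.mul_one]
  · rw [_root_.mul_assoc, hone, _root_.mul_one]; linarith

lemma IsTestFun.eq_sum {f : ℝ → ℝ} (hf : IsTestFun M f) :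
    f = fun x => ∑ j ∈ Finset.range (4 ^ M),
      f ((j:ℝ) * 2 ^ (-(M:ℤ))) * (gridIval M (j:ℤ)).indicator 1 x := by
  funext x
  have hc : (0:ℝ) < 2 ^ (M:ℤ) := by positivity
  by_cases hx : x ∈ Ico (0:ℝ) (2 ^ (M:ℤ))
  · set jx : ℤ := ⌊x * 2 ^ (M:ℤ)⌋ with hjx
    have hx0 : 0 ≤ x * 2 ^ (M:ℤ) := mul_nonneg hx.1 hc.le
    have hj0 : 0 ≤ jx := Int.floor_nonneg.2 hx0
    have hj4 : jx < 4 ^ M := by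
      rw [hjx, Int.floor_lt]
      have h2 : (2:ℝ) ^ (M:ℤ) = 2 ^ M := zpow_natCast 2 M
      have hlt : x * 2 ^ (M:ℤ) < 2 ^ (M:ℤ) * 2 ^ (M:ℤ) := by nlinarith [hx.2]
      have h4c : (((4:ℤ) ^ M : ℤ) : ℝ) = 2 ^ (M:ℤ) * 2 ^ (M:ℤ) := by
        push_cast
        rw [h2]
        exact four_pow M
      rw [h4c]
      exact hlt
    have hxmem : x ∈ gridIval M jx :=
      mem_gridIval_iff.2 ⟨Int.floor_le _, Int.lt_floor_add_one _⟩
    have hval : f x = f ((jx:ℝ) * 2 ^ (-(M:ℤ))) :=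
      hf.2 jx x hxmem _ (self_mem_gridIval jx)
    rw [Finset.sum_eq_single jx.toNat]
    · have hcast : ((jx.toNat : ℤ) : ℝ) = (jx : ℝ) := by
        rw [Int.toNat_of_nonneg hj0]
      rw [show ((jx.toNat : ℕ) : ℝ) = (jx:ℝ) by exact_mod_cast hcast]
      rw [show ((jx.toNat : ℕ) : ℤ) = jx by omega]
      rw [Set.indicator_of_mem hxmem, Pi.one_apply, _root_.mul_one, hval]
    · intro b _ hbne
      have hbja : x ∉ gridIval M (b:ℤ) := by
        intro hmem
        rw [mem_gridIval_iff] at hmem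
        have : (b:ℤ) = jx := by
          rw [hjx]
          symm
          apply Int.floor_eq_iff.2
          constructor
          · exact_mod_cast hmem.1
          · exact_mod_cast hmem.2
        omega
      rw [Set.indicator_of_notMem hbja, mul_zero]
    · intro hnot
      exfalso
      apply hnot
      rw [Finset.mem_range]
      have hlt : (jx.toNat : ℤ) < (4:ℤ) ^ M := by rw [Int.toNat_of_nonneg hj0]; exact hj4
      exact_mod_cast hlt
  · rw [hf.1 x hx]
    symm
    apply Finset.sum_eq_zero
    intro b hb
    have : x ∉ gridIval M (b:ℤ) := by
      intro hmem
      exact hx (gridIval_subset_base (by positivity) (by exact_mod_cast Finset.mem_range.1 hb) hmem)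
    rw [Set.indicator_of_notMem this, mul_zero]

lemma IsTestFun.nice {f : ℝ → ℝ} (hf : IsTestFun M f) : Nice f := by
  rw [hf.eq_sum]
  apply Nice.finsetSum
  intro j _
  exact (Nice.indicator_one measurableSet_Ico).const_mul _

lemma IsTestFun.supported {f : ℝ → ℝ} (hf : IsTestFun M f) : Supported M f := hf.1

/-! ### Part 5: Haar functions -/

namespace Tile

variable (P Q : Tile M)

lemma sqrt_len_pos : 0 < Real.sqrt P.len := Real.sqrt_pos.2 P.len_pos_s11

lemma haar_eq_zero {x : ℝ} (hx : x ∉ P.ival) : P.haar x = 0 := by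
  rw [Tile.haar, Set.indicator_of_notMem (fun h => hx (P.left_subset h)),
    Set.indicator_of_notMem (fun h => hx (P.right_subset h))]
  simp

lemma haar_abs_le (x : ℝ) : |P.haar x| ≤ (Real.sqrt P.len)⁻¹ := by
  have hs : (0:ℝ) ≤ (Real.sqrt P.len)⁻¹ := inv_nonneg.2 (Real.sqrt_nonneg _)
  rw [Tile.haar, abs_mul, abs_of_nonneg hs]
  have h1 : |P.left.indicator (1 : ℝ → ℝ) x - P.right.indicator (1 : ℝ → ℝ) x| ≤ 1 := by
    have hL : P.left.indicator (1 : ℝ → ℝ) x = 0 ∨ P.left.indicator (1 : ℝ → ℝ) x = 1 := by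
      by_cases hl : x ∈ P.left <;> simp [hl]
    have hR : P.right.indicator (1 : ℝ → ℝ) x = 0 ∨ P.right.indicator (1 : ℝ → ℝ) x = 1 := by
      by_cases hr : x ∈ P.right <;> simp [hr]
    rcases hL with h | h <;> rcases hR with h' | h' <;> rw [h, h'] <;> norm_num
  exact le_trans (mul_le_mul_of_nonneg_left h1 hs) (le_of_eq (_root_.mul_one _))

lemma nice_haar : Nice P.haar := by
  refine ⟨?_, (Real.sqrt P.len)⁻¹, P.haar_abs_le⟩
  apply Measurable.const_mul
  exact (measurable_const.indicator P.measurableSet_left).sub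
    (measurable_const.indicator P.measurableSet_right)

lemma haar_supported : Supported M P.haar := fun x hx =>
  P.haar_eq_zero (fun h => hx (P.ival_subset_base h))

lemma integrable_indicator_one {s : Set ℝ} (hs : MeasurableSet s) (hv : volume s ≠ ⊤) :
    Integrable (s.indicator (1 : ℝ → ℝ)) := by
  rw [integrable_indicator_iff hs]
  exact integrableOn_const hv

lemma integral_indicator_one {s : Set ℝ} (hs : MeasurableSet s) :
    ∫ x, s.indicator (1 : ℝ → ℝ) x = (volume s).toReal := by
  rw [integral_indicator hs]
  simp only [Pi.one_apply]
  rw [setIntegral_const, smul_eq_mul, _root_.mul_one]; rfl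

lemma volume_left_ne_top : volume P.left ≠ ⊤ := by
  rw [P.volume_left]; exact ENNReal.ofReal_ne_top

lemma volume_right_ne_top : volume P.right ≠ ⊤ := by
  rw [P.volume_right]; exact ENNReal.ofReal_ne_top

lemma integral_haar : ∫ x, P.haar x = 0 := by
  have hil := integrable_indicator_one P.measurableSet_left P.volume_left_ne_top
  have hir := integrable_indicator_one P.measurableSet_right P.volume_right_ne_top
  simp only [Tile.haar]
  rw [integral_const_mul, integral_sub hil hir,
    integral_indicator_one P.measurableSet_left, integral_indicator_one P.measurableSet_right,
    P.volume_left, P.volume_right]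
  simp

lemma mul_indicator_eq {f : ℝ → ℝ} (s : Set ℝ) :
    (fun x => f x * s.indicator 1 x) = s.indicator f := by
  funext x
  by_cases h : x ∈ s <;>
    simp [Set.indicator_of_mem, Set.indicator_of_notMem, h]

lemma waveCoeff_eq {f : ℝ → ℝ} (hf : Nice f) (P : Tile M) :
    waveCoeff f P = (Real.sqrt P.len)⁻¹ * ((∫ x in P.left, f x) - ∫ x in P.right, f x) := by
  rw [waveCoeff]
  have h1 : (fun x => f x * P.haar x) =
      fun x => (Real.sqrt P.len)⁻¹ * (P.left.indicator f x - P.right.indicator f x) := by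
    funext x
    simp only [Tile.haar, ← mul_indicator_eq (f := f) P.left, ← mul_indicator_eq (f := f) P.right]
    ring
  rw [h1, integral_const_mul]
  congr 1
  have hl : Integrable (P.left.indicator f) := by
    rw [integrable_indicator_iff P.measurableSet_left]
    exact hf.integrableOn P.volume_left_ne_top
  have hr : Integrable (P.right.indicator f) := by
    rw [integrable_indicator_iff P.measurableSet_right]
    exact hf.integrableOn P.volume_right_ne_top
  rw [integral_sub hl hr, integral_indicator P.measurableSet_left,
    integral_indicator P.measurableSet_right]

lemma trichotomy : P.le Q ∨ Q.le P ∨ Disjoint P.ival Q.ival := by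
  rcases le_total P.k Q.k with h | h
  · rcases le_or_disjoint h with h' | h'
    exacts [Or.inl h', Or.inr (Or.inr h')]
  · rcases le_or_disjoint h with h' | h'
    exacts [Or.inr (Or.inl h'), Or.inr (Or.inr h'.symm)]

lemma integral_haar_sq : ∫ x, P.haar x * P.haar x = 1 := by
  have hpt : (fun x => P.haar x * P.haar x) =
      fun x => (P.len)⁻¹ * (P.left.indicator 1 x + P.right.indicator 1 x) := by
    funext x
    simp only [Tile.haar]
    have hsq : (Real.sqrt P.len)⁻¹ * (Real.sqrt P.len)⁻¹ = (P.len)⁻¹ := by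
      rw [← mul_inv]
      congr 1
      exact Real.mul_self_sqrt P.len_pos_s11.le
    by_cases hl : x ∈ P.left
    · have hr : x ∉ P.right := fun hr => Set.disjoint_left.1 P.disjoint_left_right hl hr
      simp [Set.indicator_of_mem, Set.indicator_of_notMem, hl, hr]
      calc (Real.sqrt P.len)⁻¹ * (Real.sqrt P.len)⁻¹ = (P.len)⁻¹ := hsq
      _ = _ := by ring
    · by_cases hr : x ∈ P.right
      · simp only [Set.indicator_of_notMem hl, Set.indicator_of_mem hr, Pi.one_apply]
        calc (Real.sqrt P.len)⁻¹ * (0 - 1) * ((Real.sqrt P.len)⁻¹ * (0 - 1))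
            = (Real.sqrt P.len)⁻¹ * (Real.sqrt P.len)⁻¹ := by ring
        _ = (P.len)⁻¹ := hsq
        _ = _ := by ring
      · simp [Set.indicator_of_notMem, hl, hr]
  rw [hpt]
  have hil := integrable_indicator_one P.measurableSet_left P.volume_left_ne_top
  have hir := integrable_indicator_one P.measurableSet_right P.volume_right_ne_top
  rw [integral_const_mul, integral_add hil hir,
    integral_indicator_one P.measurableSet_left, integral_indicator_one P.measurableSet_right,
    P.volume_left, P.volume_right, ENNReal.toReal_ofReal (by linarith [P.len_pos_s11] : (0:ℝ) ≤ P.len / 2)]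
  field_simp [P.len_pos_s11.ne']
  norm_num

lemma integral_haar_mul_of_le {P Q : Tile M} (h : P.le Q) (hne : P ≠ Q) :
    ∫ x, P.haar x * Q.haar x = 0 := by
  have hk := k_lt_of_le_ne h hne
  have hcases := le_left_or_le_right h hk
  rcases hcases with hsub | hsub
  · have hpt : (fun x => P.haar x * Q.haar x) =
        fun x => (Real.sqrt Q.len)⁻¹ * P.haar x := by
      funext x
      by_cases hx : x ∈ P.ival
      · have hl : x ∈ Q.left := hsub hx
        have hr : x ∉ Q.right := fun hr => Set.disjoint_left.1 Q.disjoint_left_right hl hr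
        simp only [Tile.haar, Set.indicator_of_mem hl, Set.indicator_of_notMem hr, Pi.one_apply]
        ring
      · rw [P.haar_eq_zero hx]; ring
    rw [hpt, integral_const_mul, P.integral_haar, mul_zero]
  · have hpt : (fun x => P.haar x * Q.haar x) =
        fun x => -(Real.sqrt Q.len)⁻¹ * P.haar x := by
      funext x
      by_cases hx : x ∈ P.ival
      · have hr : x ∈ Q.right := hsub hx
        have hl : x ∉ Q.left := fun hl => Set.disjoint_left.1 Q.disjoint_left_right hl hr
        simp only [Tile.haar, Set.indicator_of_mem hr, Set.indicator_of_notMem hl, Pi.one_apply]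
        ring
      · rw [P.haar_eq_zero hx]; ring
    rw [hpt, integral_const_mul, P.integral_haar, mul_zero]

lemma integral_haar_mul : ∫ x, P.haar x * Q.haar x = if P = Q then 1 else 0 := by
  by_cases h : P = Q
  · rw [if_pos h, h, Q.integral_haar_sq]
  · rw [if_neg h]
    rcases trichotomy P Q with hle | hle | hdis
    · exact integral_haar_mul_of_le hle h
    · rw [show (fun x => P.haar x * Q.haar x) = fun x => Q.haar x * P.haar x from
        funext fun x => _root_.mul_comm _ _]
      exact integral_haar_mul_of_le hle (Ne.symm h)
    · have : (fun x => P.haar x * Q.haar x) = fun _ => (0:ℝ) := by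
        funext x
        by_cases hx : x ∈ P.ival
        · rw [Q.haar_eq_zero (Set.disjoint_left.1 hdis hx), mul_zero]
        · rw [P.haar_eq_zero hx, zero_mul]
      rw [this, integral_zero]

end Tile

/-! ### Part 6: Bessel and L² norms of Haar expansions -/

lemma Supported.mul_right {f g : ℝ → ℝ} (hg : Supported M g) :
    Supported M (fun x => f x * g x) := fun x hx => by
  show f x * g x = 0
  rw [hg x hx, mul_zero]

lemma Supported.mul_left {f g : ℝ → ℝ} (hf : Supported M f) :
    Supported M (fun x => f x * g x) := fun x hx => by
  show f x * g x = 0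
  rw [hf x hx, zero_mul]

lemma Supported.const_mul {f : ℝ → ℝ} (hf : Supported M f) (c : ℝ) :
    Supported M (fun x => c * f x) := fun x hx => by
  show c * f x = 0
  rw [hf x hx, mul_zero]

lemma Supported.finsetSum {ι : Type*} (s : Finset ι) (f : ι → ℝ → ℝ)
    (h : ∀ i ∈ s, Supported M (f i)) : Supported M (fun x => ∑ i ∈ s, f i x) :=
  fun x hx => Finset.sum_eq_zero (fun i hi => h i hi x hx)

lemma Nice.sq {f : ℝ → ℝ} (hf : Nice f) : Nice (fun x => f x ^ 2) := by
  have : (fun x => f x ^ 2) = fun x => f x * f x := funext fun x => by ring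
  rw [this]; exact hf.mul hf

lemma integrable_coeff_haar (c d : ℝ) (P Q : Tile M) :
    Integrable (fun x => (c * P.haar x) * (d * Q.haar x)) := by
  have hn : Nice (fun x => (c * P.haar x) * (d * Q.haar x)) :=
    (P.nice_haar.const_mul c).mul (Q.nice_haar.const_mul d)
  exact hn.integrable (fun x hx => by beta_reduce; rw [P.haar_supported x hx]; ring)

lemma integral_coeff_haar (c : Tile M → ℝ) (P Q : Tile M) :
    ∫ x, (c P * P.haar x) * (c Q * Q.haar x) = if P = Q then c P ^ 2 else 0 := by
  have h1 : (fun x => (c P * P.haar x) * (c Q * Q.haar x)) =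
      fun x => (c P * c Q) * (P.haar x * Q.haar x) := funext fun x => by ring
  rw [h1, integral_const_mul, Tile.integral_haar_mul]
  by_cases h : P = Q
  · rw [if_pos h, if_pos h, ← h, _root_.mul_one]; ring
  · rw [if_neg h, if_neg h, mul_zero]

lemma integral_haar_expansion_sq (c : Tile M → ℝ) :
    ∫ x, (∑ P : Tile M, c P * P.haar x) ^ 2 = ∑ P : Tile M, c P ^ 2 := by
  have h1 : (fun x => (∑ P : Tile M, c P * P.haar x) ^ 2) =
      fun x => ∑ P : Tile M, ∑ Q : Tile M, (c P * P.haar x) * (c Q * Q.haar x) := by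
    funext x
    rw [pow_two, Finset.sum_mul_sum]
  rw [h1, integral_finset_sum _ (fun P _ =>
    integrable_finset_sum _ (fun Q _ => integrable_coeff_haar (c P) (c Q) P Q))]
  have h2 : ∀ P : Tile M, ∫ x, ∑ Q : Tile M, (c P * P.haar x) * (c Q * Q.haar x)
      = c P ^ 2 := by
    intro P
    rw [integral_finset_sum _ (fun Q _ => integrable_coeff_haar (c P) (c Q) P Q)]
    have : ∀ Q : Tile M, ∫ x, (c P * P.haar x) * (c Q * Q.haar x) =
        if P = Q then c P ^ 2 else 0 := fun Q => integral_coeff_haar c P Q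
    rw [Finset.sum_congr rfl (fun Q _ => this Q)]
    simp
  exact Finset.sum_congr rfl (fun P _ => h2 P)

lemma nice_haar_expansion (c : Tile M → ℝ) :
    Nice (fun x => ∑ P : Tile M, c P * P.haar x) :=
  Nice.finsetSum _ _ (fun P _ => P.nice_haar.const_mul (c P))

lemma supported_haar_expansion (c : Tile M → ℝ) :
    Supported M (fun x => ∑ P : Tile M, c P * P.haar x) :=
  Supported.finsetSum _ _ (fun P _ => (P.haar_supported).const_mul (c P))

lemma integrable_mul_haar {f : ℝ → ℝ} (hf : Nice f) (P : Tile M) :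
    Integrable (fun x => f x * P.haar x) :=
  (hf.mul P.nice_haar).integrable ((P.haar_supported).mul_right)

/-- Bessel's inequality for the Haar system. -/
lemma bessel {f : ℝ → ℝ} (hf : Nice f) (hs : Supported M f) :
    ∑ P : Tile M, (waveCoeff f P) ^ 2 ≤ ∫ x, f x ^ 2 := by
  set c : Tile M → ℝ := waveCoeff f with hc
  set G : ℝ → ℝ := fun x => ∑ P : Tile M, c P * P.haar x with hG
  have hGnice : Nice G := nice_haar_expansion c
  have hGsupp : Supported M G := supported_haar_expansion c
  have hf2 : Integrable (fun x => f x ^ 2) := hf.sq.integrable (fun x hx => by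
    beta_reduce; rw [hs x hx]; ring)
  have hfG : Integrable (fun x => f x * G x) :=
    (hf.mul hGnice).integrable ((hGsupp).mul_right)
  have hG2 : Integrable (fun x => G x ^ 2) := hGnice.sq.integrable (fun x hx => by
    beta_reduce; rw [hGsupp x hx]; ring)
  have hfGval : ∫ x, f x * G x = ∑ P : Tile M, c P ^ 2 := by
    have h1 : (fun x => f x * G x) = fun x => ∑ P : Tile M, c P * (f x * P.haar x) := by
      funext x
      rw [hG, Finset.mul_sum]
      exact Finset.sum_congr rfl (fun P _ => by ring)
    rw [h1, integral_finset_sum _ (fun P _ => (integrable_mul_haar hf P).const_mul (c P))]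
    refine Finset.sum_congr rfl (fun P _ => ?_)
    rw [integral_const_mul]
    have : ∫ x, f x * P.haar x = c P := rfl
    rw [this, pow_two]
  have hGval : ∫ x, G x ^ 2 = ∑ P : Tile M, c P ^ 2 := integral_haar_expansion_sq c
  have hkey : 0 ≤ ∫ x, (f x - G x) ^ 2 := integral_nonneg (fun x => sq_nonneg _)
  have hexp : ∫ x, (f x - G x) ^ 2 = (∫ x, f x ^ 2) - 2 * (∫ x, f x * G x) + ∫ x, G x ^ 2 := by
    have h1 : (fun x => (f x - G x) ^ 2) =
        fun x => (f x ^ 2 - 2 * (f x * G x)) + G x ^ 2 := funext fun x => by ring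
    have hsub : Integrable (fun x => f x ^ 2 - 2 * (f x * G x)) := hf2.sub (hfG.const_mul 2)
    have hmul : Integrable (fun x => 2 * (f x * G x)) := hfG.const_mul 2
    rw [h1, integral_add hsub hG2, integral_sub hf2 hmul, integral_const_mul]
  rw [hexp, hfGval, hGval] at hkey
  linarith

/-- `L²` norm of a Haar expansion. -/
lemma l2Norm_haar_expansion (c : Tile M → ℝ) :
    l2Norm (fun x => ∑ P : Tile M, c P * P.haar x) =
      Real.sqrt (∑ P : Tile M, c P ^ 2) := by
  rw [l2Norm, integral_haar_expansion_sq c]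

/-! ### Part 7: averages and the Carleson embedding theorem -/

lemma setIntegral_ival_split {h : ℝ → ℝ} (hh : Nice h) {J : Tile M} (hk : -(M:ℤ) < J.k) :
    ∫ x in J.ival, h x = (∫ x in (J.childL hk).ival, h x) + ∫ x in (J.childR hk).ival, h x := by
  rw [J.childL_ival, J.childR_ival, ← setIntegral_union J.disjoint_left_right
    J.measurableSet_right (hh.integrableOn J.volume_left_ne_top)
    (hh.integrableOn J.volume_right_ne_top), J.left_union_right]

lemma tileAvg_mul_len (h : ℝ → ℝ) (P : Tile M) :
    tileAvg h P * P.len = ∫ x in P.ival, h x :=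
  div_mul_cancel₀ _ P.len_pos_s11.ne'

lemma tileAvg_split {h : ℝ → ℝ} (hh : Nice h) {J : Tile M} (hk : -(M:ℤ) < J.k) :
    tileAvg h J = (tileAvg h (J.childL hk) + tileAvg h (J.childR hk)) / 2 := by
  rw [tileAvg, tileAvg, tileAvg, setIntegral_ival_split hh hk, J.childL_len, J.childR_len]
  field_simp

lemma sq_tileAvg_le {h : ℝ → ℝ} (hh : Nice h) (P : Tile M) :
    P.len * tileAvg h P ^ 2 ≤ ∫ x in P.ival, h x ^ 2 := by
  have hIh : IntegrableOn h P.ival := hh.integrableOn_ival P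
  have hIh2 : IntegrableOn (fun x => h x ^ 2) P.ival := hh.sq.integrableOn_ival P
  have h0 : 0 ≤ ∫ x in P.ival, (h x - tileAvg h P) ^ 2 :=
    setIntegral_nonneg P.measurableSet_ival (fun x _ => sq_nonneg _)
  have hconst : IntegrableOn (fun _ : ℝ => tileAvg h P ^ 2) P.ival := by
    exact integrableOn_const (by rw [P.volume_ival]; exact ENNReal.ofReal_ne_top)
  have hsub : IntegrableOn (fun x => h x ^ 2 - 2 * tileAvg h P * h x) P.ival :=
    hIh2.sub (hIh.const_mul (2 * tileAvg h P))
  have hexp : ∫ x in P.ival, (h x - tileAvg h P) ^ 2 =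
      (∫ x in P.ival, h x ^ 2) - 2 * tileAvg h P * (∫ x in P.ival, h x)
        + tileAvg h P ^ 2 * P.len := by
    have h1 : (fun x => (h x - tileAvg h P) ^ 2) =
        fun x => (h x ^ 2 - 2 * tileAvg h P * h x) + tileAvg h P ^ 2 :=
      funext fun x => by ring
    rw [h1, integral_add hsub hconst, integral_sub hIh2 (hIh.const_mul _),
      integral_const_mul, setIntegral_const, smul_eq_mul, Measure.real, P.volume_ival_toReal]
    ring
  have havg : ∫ x in P.ival, h x = tileAvg h P * P.len := (tileAvg_mul_len h P).symm
  rw [hexp, havg] at h0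
  nlinarith [h0]

/-- The key algebraic inequality for the Bellman-type induction. -/
lemma carleson_key {L a Sl Sr xl xr : ℝ} (hL : 0 < L) (ha : 0 ≤ a)
    (hSl : 0 ≤ Sl) (hSr : 0 ≤ Sr) (hSl' : Sl ≤ L / 2) (hSr' : Sr ≤ L / 2)
    (hS : a + Sl + Sr ≤ L) :
    a * ((xl + xr) / 2) ^ 2 + 4 * L ^ 2 * ((xl + xr) / 2) ^ 2 / (L + (a + Sl + Sr)) ≤
      4 * (L / 2) ^ 2 * xl ^ 2 / (L / 2 + Sl) + 4 * (L / 2) ^ 2 * xr ^ 2 / (L / 2 + Sr) := by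
  have hdl : (0:ℝ) < L / 2 + Sl := by linarith
  have hdr : (0:ℝ) < L / 2 + Sr := by linarith
  have hD1 : (0:ℝ) < L + (a + Sl + Sr) := by linarith
  have hD2 : (0:ℝ) < (L / 2 + Sl) + (L / 2 + Sr) := by linarith
  -- Cauchy-Schwarz
  have hCS : (xl + xr) ^ 2 / ((L / 2 + Sl) + (L / 2 + Sr)) ≤
      xl ^ 2 / (L / 2 + Sl) + xr ^ 2 / (L / 2 + Sr) := by
    rw [div_add_div _ _ hdl.ne' hdr.ne', div_le_div_iff₀ hD2 (by positivity)]
    nlinarith [sq_nonneg (xl * (L / 2 + Sr) - xr * (L / 2 + Sl))]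
  -- middle step
  have hmid : a * ((xl + xr) / 2) ^ 2 + 4 * L ^ 2 * ((xl + xr) / 2) ^ 2 / (L + (a + Sl + Sr)) ≤
      L ^ 2 * ((xl + xr) ^ 2 / ((L / 2 + Sl) + (L / 2 + Sr))) := by
    have hD2' : (L / 2 + Sl) + (L / 2 + Sr) = L + (a + Sl + Sr) - a := by ring
    have hdiff : L ^ 2 * ((xl + xr) ^ 2 / ((L / 2 + Sl) + (L / 2 + Sr)))
        - 4 * L ^ 2 * ((xl + xr) / 2) ^ 2 / (L + (a + Sl + Sr))
        = L ^ 2 * (xl + xr) ^ 2 * a / ((L + (a + Sl + Sr)) * ((L / 2 + Sl) + (L / 2 + Sr))) := by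
      field_simp
      ring
    have hbound : a * ((xl + xr) / 2) ^ 2 ≤
        L ^ 2 * (xl + xr) ^ 2 * a / ((L + (a + Sl + Sr)) * ((L / 2 + Sl) + (L / 2 + Sr))) := by
      rw [le_div_iff₀ (by positivity)]
      have hD12 : (L + (a + Sl + Sr)) * ((L / 2 + Sl) + (L / 2 + Sr)) ≤ 4 * L ^ 2 := by
        have e1 : L + (a + Sl + Sr) ≤ 2 * L := by linarith
        have e2 : (L / 2 + Sl) + (L / 2 + Sr) ≤ 2 * L := by linarith
        calc (L + (a + Sl + Sr)) * ((L / 2 + Sl) + (L / 2 + Sr)) ≤ (2 * L) * (2 * L) :=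
          mul_le_mul e1 e2 (by linarith) (by linarith)
        _ = 4 * L ^ 2 := by ring
      nlinarith [mul_nonneg (mul_nonneg ha (sq_nonneg (xl + xr)))
        (sub_nonneg.2 hD12), sq_nonneg (xl + xr), mul_nonneg ha (sq_nonneg (xl + xr))]
    linarith
  have hfin : L ^ 2 * ((xl + xr) ^ 2 / ((L / 2 + Sl) + (L / 2 + Sr))) ≤
      L ^ 2 * (xl ^ 2 / (L / 2 + Sl) + xr ^ 2 / (L / 2 + Sr)) :=
    mul_le_mul_of_nonneg_left hCS (by positivity)
  have heq : L ^ 2 * (xl ^ 2 / (L / 2 + Sl) + xr ^ 2 / (L / 2 + Sr)) =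
      4 * (L / 2) ^ 2 * xl ^ 2 / (L / 2 + Sl) + 4 * (L / 2) ^ 2 * xr ^ 2 / (L / 2 + Sr) := by
    field_simp
    ring
  linarith [hmid, hfin, heq.le, heq.ge]

/-- Bellman-type induction for the Carleson embedding theorem (normalized). -/
lemma carleson_aux {h : ℝ → ℝ} (hh : Nice h) (a : Tile M → ℝ) (ha : ∀ P, 0 ≤ a P)
    (hcar : ∀ J : Tile M, ∑ P ∈ tilesUnder J, a P ≤ J.len) :
    ∀ (n : ℕ) (J : Tile M), (J.k + (M:ℤ)).toNat = n →
      ∑ P ∈ tilesUnder J, a P * tileAvg h P ^ 2 ≤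
        4 * (∫ x in J.ival, h x ^ 2) -
          4 * J.len ^ 2 * tileAvg h J ^ 2 / (J.len + ∑ P ∈ tilesUnder J, a P) := by
  intro n
  induction n using Nat.strong_induction_on with
  | _ n ih =>
    intro J hn
    have hL : 0 < J.len := J.len_pos_s11
    have hS0 : 0 ≤ ∑ P ∈ tilesUnder J, a P := Finset.sum_nonneg fun P _ => ha P
    have hSL : ∑ P ∈ tilesUnder J, a P ≤ J.len := hcar J
    have hFx : J.len * tileAvg h J ^ 2 ≤ ∫ x in J.ival, h x ^ 2 := sq_tileAvg_le hh J
    by_cases hbase : J.k = -(M:ℤ)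
    · -- base case
      simp only [tilesUnder_base hbase, Finset.sum_singleton] at hS0 hSL ⊢
      have hkey : 4 * J.len ^ 2 * tileAvg h J ^ 2 / (J.len + a J)
          ≤ 4 * J.len * tileAvg h J ^ 2 - a J * tileAvg h J ^ 2 := by
        rw [div_le_iff₀ (by linarith : (0:ℝ) < J.len + a J)]
        nlinarith [mul_nonneg (mul_nonneg (ha J) (by linarith : (0:ℝ) ≤ 3 * J.len - a J))
          (sq_nonneg (tileAvg h J))]
      linarith
    · -- inductive step
      have hk : -(M:ℤ) < J.k := lt_of_le_of_ne J.hk_lb (Ne.symm hbase)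
      have hmL : ((J.childL hk).k + (M:ℤ)).toNat < n := by
        rw [Tile.childL_k]; omega
      have hmR : ((J.childR hk).k + (M:ℤ)).toNat < n := by
        rw [Tile.childR_k]; omega
      have ihL := ih _ hmL (J.childL hk) rfl
      have ihR := ih _ hmR (J.childR hk) rfl
      rw [J.childL_len hk] at ihL
      rw [J.childR_len hk] at ihR
      have hBsplit : ∑ P ∈ tilesUnder J, a P * tileAvg h P ^ 2 =
          a J * tileAvg h J ^ 2 + (∑ P ∈ tilesUnder (J.childL hk), a P * tileAvg h P ^ 2)
            + ∑ P ∈ tilesUnder (J.childR hk), a P * tileAvg h P ^ 2 :=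
        sum_tilesUnder_split _ hk
      have hSsplit : ∑ P ∈ tilesUnder J, a P =
          a J + (∑ P ∈ tilesUnder (J.childL hk), a P)
            + ∑ P ∈ tilesUnder (J.childR hk), a P :=
        sum_tilesUnder_split _ hk
      have hFsplit : (∫ x in J.ival, h x ^ 2) =
          (∫ x in (J.childL hk).ival, h x ^ 2) + ∫ x in (J.childR hk).ival, h x ^ 2 :=
        setIntegral_ival_split hh.sq hk
      have hxsplit : tileAvg h J =
          (tileAvg h (J.childL hk) + tileAvg h (J.childR hk)) / 2 := tileAvg_split hh hk
      have hSl0 : 0 ≤ ∑ P ∈ tilesUnder (J.childL hk), a P :=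
        Finset.sum_nonneg fun P _ => ha P
      have hSr0 : 0 ≤ ∑ P ∈ tilesUnder (J.childR hk), a P :=
        Finset.sum_nonneg fun P _ => ha P
      have hSl' : ∑ P ∈ tilesUnder (J.childL hk), a P ≤ J.len / 2 := by
        have := hcar (J.childL hk); rwa [J.childL_len hk] at this
      have hSr' : ∑ P ∈ tilesUnder (J.childR hk), a P ≤ J.len / 2 := by
        have := hcar (J.childR hk); rwa [J.childR_len hk] at this
      have hsum_le : a J + (∑ P ∈ tilesUnder (J.childL hk), a P)
          + ∑ P ∈ tilesUnder (J.childR hk), a P ≤ J.len := by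
        rw [← hSsplit]; exact hSL
      have hkey := carleson_key (xl := tileAvg h (J.childL hk))
        (xr := tileAvg h (J.childR hk)) hL (ha J) hSl0 hSr0 hSl' hSr' hsum_le
      rw [hBsplit, hSsplit, hFsplit, hxsplit]
      linarith [ihL, ihR, hkey]

/-- The Carleson embedding theorem. -/
lemma carleson_embedding {h : ℝ → ℝ} (hh : Nice h) (a : Tile M → ℝ) (ha : ∀ P, 0 ≤ a P)
    {C : ℝ} (hC : 0 ≤ C)
    (hcar : ∀ J : Tile M, ∑ P ∈ tilesUnder J, a P ≤ C * J.len) :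
    ∑ P : Tile M, a P * tileAvg h P ^ 2 ≤
      4 * C * ∫ x in (topTile M).ival, h x ^ 2 := by
  rcases eq_or_lt_of_le hC with hC0 | hC0
  · -- C = 0 : all coefficients vanish
    have hzero : ∀ P : Tile M, a P = 0 := by
      intro P
      have h1 : a P ≤ ∑ Q ∈ tilesUnder P, a Q :=
        Finset.single_le_sum (fun Q _ => ha Q) (self_mem_tilesUnder P)
      have h2 : ∑ Q ∈ tilesUnder P, a Q ≤ 0 := by
        have := hcar P
        rw [← hC0] at this
        simpa using this
      exact le_antisymm (by linarith [ha P]) (ha P)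
    rw [show ∑ P : Tile M, a P * tileAvg h P ^ 2 = 0 from
      Finset.sum_eq_zero fun P _ => by rw [hzero P, zero_mul], ← hC0]
    simp
  · -- C > 0 : rescale
    have haux := carleson_aux hh (fun P => a P / C) (fun P => div_nonneg (ha P) hC)
      (fun J => by
        rw [← Finset.sum_div, div_le_iff₀ hC0]
        calc ∑ P ∈ tilesUnder J, a P ≤ C * J.len := hcar J
        _ = J.len * C := by ring)
      (((topTile M).k + (M:ℤ)).toNat) (topTile M) rfl
    have hpos : 0 < (topTile M).len + ∑ P ∈ tilesUnder (topTile M), a P / C := by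
      have h0 : 0 ≤ ∑ P ∈ tilesUnder (topTile M), a P / C :=
        Finset.sum_nonneg fun P _ => div_nonneg (ha P) hC
      linarith [(topTile M).len_pos_s11]
    have hsub : 0 ≤ 4 * (topTile M).len ^ 2 * tileAvg h (topTile M) ^ 2 /
        ((topTile M).len + ∑ P ∈ tilesUnder (topTile M), a P / C) := by positivity
    have hmain : ∑ P ∈ tilesUnder (topTile M), (a P / C) * tileAvg h P ^ 2 ≤
        4 * ∫ x in (topTile M).ival, h x ^ 2 := by linarith [haux]
    rw [tilesUnder_topTile] at hmain
    have hfinal : ∑ P : Tile M, a P * tileAvg h P ^ 2 =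
        C * ∑ P : Tile M, (a P / C) * tileAvg h P ^ 2 := by
      rw [Finset.mul_sum]
      refine Finset.sum_congr rfl fun P _ => ?_
      field_simp
    rw [hfinal]
    calc C * ∑ P : Tile M, (a P / C) * tileAvg h P ^ 2
        ≤ C * (4 * ∫ x in (topTile M).ival, h x ^ 2) :=
          mul_le_mul_of_nonneg_left hmain hC
    _ = 4 * C * ∫ x in (topTile M).ival, h x ^ 2 := by ring

/-! ### Part 8: size, BMO, and the main estimates -/

lemma finsum_mem_le_sum_univ (a : Tile M → ℝ) (ha : ∀ P, 0 ≤ a P) (s : Set (Tile M)) :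
    ∑ᶠ P ∈ s, a P ≤ ∑ P : Tile M, a P := by
  rw [← Set.coe_toFinset s, finsum_mem_coe_finset]
  exact Finset.sum_le_sum_of_subset_of_nonneg (Finset.subset_univ _) (fun P _ _ => ha P)

lemma bddAbove_sizes (a : Tile M → ℝ) (ha : ∀ P, 0 ≤ a P) :
    BddAbove (insert (0:ℝ) {s : ℝ | ∃ T : Tree M, T.tiles ⊆ Set.univ ∧ IsConvex T.tiles ∧
      s = treeSize a T}) := by
  refine ⟨2 ^ (M:ℤ) * ∑ P : Tile M, a P, ?_⟩
  have hsum0 : 0 ≤ ∑ P : Tile M, a P := Finset.sum_nonneg fun P _ => ha P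
  rintro s (rfl | ⟨T, -, -, rfl⟩)
  · exact mul_nonneg (by positivity) hsum0
  · rw [treeSize]
    have h1 : ∑ᶠ P ∈ T.tiles, a P ≤ ∑ P : Tile M, a P := finsum_mem_le_sum_univ a ha _
    have hlen : (2:ℝ) ^ (-(M:ℤ)) ≤ T.len :=
      zpow_le_zpow_right₀ one_le_two T.top.hk_lb
    have hlenpos : 0 < T.len := T.top.len_pos_s11
    rw [div_le_iff₀ hlenpos]
    calc ∑ᶠ P ∈ T.tiles, a P ≤ ∑ P : Tile M, a P := h1
    _ = (2 ^ (M:ℤ) * ∑ P : Tile M, a P) * 2 ^ (-(M:ℤ)) := by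
        rw [_root_.mul_comm ((2:ℝ) ^ (M:ℤ)) _, _root_.mul_assoc, ← zpow_add₀ (two_ne_zero : (2:ℝ) ≠ 0)]
        norm_num
    _ ≤ (2 ^ (M:ℤ) * ∑ P : Tile M, a P) * T.len :=
        mul_le_mul_of_nonneg_left hlen (by positivity)

lemma maxSize_nonneg (a : Tile M → ℝ) (ha : ∀ P, 0 ≤ a P) :
    0 ≤ maxSize a (Set.univ) :=
  le_csSup (bddAbove_sizes a ha) (Set.mem_insert _ _)

lemma sum_tilesUnder_le_maxSize (a : Tile M → ℝ) (ha : ∀ P, 0 ≤ a P) (J : Tile M) :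
    ∑ P ∈ tilesUnder J, a P ≤ maxSize a Set.univ * J.len := by
  set T : Tree M := ⟨{Q | Q.le J}, J, Tile.le_refl J, fun P hP => hP⟩ with hT
  have hconv : IsConvex T.tiles := by
    intro P₁ _ P₂ h₂ P _ h₂'
    exact fun x hx => h₂ (h₂' hx)
  have hle : treeSize a T ≤ maxSize a Set.univ :=
    le_csSup (bddAbove_sizes a ha)
      (Set.mem_insert_of_mem _ ⟨T, Set.subset_univ _, hconv, rfl⟩)
  have hts : treeSize a T = (∑ P ∈ tilesUnder J, a P) / J.len := by
    rw [treeSize]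
    congr 1
    have hset : T.tiles = ↑(tilesUnder J) := by
      ext P
      rw [Finset.mem_coe, mem_tilesUnder]; exact Iff.rfl
    rw [hset, finsum_mem_coe_finset]
  rw [hts, div_le_iff₀ J.len_pos_s11] at hle
  exact hle

lemma bmo_carleson (g : ℝ → ℝ) (J : Tile M) :
    ∑ P ∈ tilesUnder J, waveCoeff g P ^ 2 ≤ bmoNorm M g ^ 2 * J.len := by
  have h := sum_tilesUnder_le_maxSize (fun P => waveCoeff g P ^ 2)
    (fun P => sq_nonneg _) J
  rwa [bmoNorm, Real.sq_sqrt (maxSize_nonneg _ (fun P => sq_nonneg _))]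

lemma bmoNorm_nonneg (g : ℝ → ℝ) : 0 ≤ bmoNorm M g := Real.sqrt_nonneg _

lemma Nice.abs {g : ℝ → ℝ} (hg : Nice g) : Nice (fun x => |g x|) := by
  obtain ⟨hm, B, hB⟩ := hg
  exact ⟨hm.abs, B, fun x => by rw [abs_abs]; exact hB x⟩

lemma abs_le_supNorm {g : ℝ → ℝ} (hg : Nice g) (x : ℝ) : |g x| ≤ supNorm g := by
  obtain ⟨-, B, hB⟩ := hg
  exact le_ciSup ⟨B, by rintro y ⟨x', rfl⟩; exact hB x'⟩ x

lemma supNorm_nonneg {g : ℝ → ℝ} (hg : Nice g) : 0 ≤ supNorm g :=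
  le_trans (abs_nonneg _) (abs_le_supNorm hg 0)

lemma abs_tileAvg_le {g : ℝ → ℝ} (hg : Nice g) (P : Tile M) :
    |tileAvg g P| ≤ supNorm g := by
  rw [tileAvg, abs_div, abs_of_pos P.len_pos_s11, div_le_iff₀ P.len_pos_s11]
  calc |∫ x in P.ival, g x| ≤ ∫ x in P.ival, |g x| := by
        rw [← Real.norm_eq_abs]
        calc ‖∫ x in P.ival, g x‖ ≤ ∫ x in P.ival, ‖g x‖ := norm_integral_le_integral_norm _
        _ = ∫ x in P.ival, |g x| := by simp [Real.norm_eq_abs]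
  _ ≤ ∫ _x in P.ival, supNorm g := by
      apply setIntegral_mono_on (hg.abs.integrableOn_ival P)
        (integrableOn_const (by rw [P.volume_ival]; exact ENNReal.ofReal_ne_top))
        P.measurableSet_ival
      exact fun x _ => abs_le_supNorm hg x
  _ = supNorm g * P.len := by
      rw [setIntegral_const, smul_eq_mul, Measure.real, P.volume_ival_toReal, _root_.mul_comm]

lemma integral_sq_nonneg (f : ℝ → ℝ) : 0 ≤ ∫ x, f x ^ 2 :=
  integral_nonneg fun x => sq_nonneg _

lemma l2Norm_nonneg (f : ℝ → ℝ) : 0 ≤ l2Norm f := Real.sqrt_nonneg _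

lemma setIntegral_top_sq {f : ℝ → ℝ} (hs : Supported M f) :
    ∫ x in (topTile M).ival, f x ^ 2 = ∫ x, f x ^ 2 := by
  rw [topTile_ival]
  exact Supported.integral_eq (fun x hx => by rw [hs x hx]; ring)

/-- The high-low paraproduct estimate. -/
lemma paraHL_est {f g : ℝ → ℝ} (hf : IsTestFun M f) (hg : IsTestFun M g) :
    l2Norm (paraHL M f g) ≤ 2 * l2Norm f * supNorm g := by
  have hfn := hf.nice
  have hgn := hg.nice
  have heq : paraHL M f g = fun x => ∑ P : Tile M,
      (waveCoeff f P * tileAvg g P) * P.haar x := by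
    funext x
    simp only [paraHL]
    exact finsum_eq_sum_of_fintype _
  rw [heq, l2Norm_haar_expansion]
  have hsum : ∑ P : Tile M, (waveCoeff f P * tileAvg g P) ^ 2 ≤
      supNorm g ^ 2 * ∑ P : Tile M, waveCoeff f P ^ 2 := by
    rw [Finset.mul_sum]
    apply Finset.sum_le_sum
    intro P _
    have h1 : tileAvg g P ^ 2 ≤ supNorm g ^ 2 := by
      rw [← sq_abs (tileAvg g P)]
      exact pow_le_pow_left₀ (abs_nonneg _) (abs_tileAvg_le hgn P) 2
    calc (waveCoeff f P * tileAvg g P) ^ 2 = waveCoeff f P ^ 2 * tileAvg g P ^ 2 := by ring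
    _ ≤ waveCoeff f P ^ 2 * supNorm g ^ 2 := mul_le_mul_of_nonneg_left h1 (sq_nonneg _)
    _ = supNorm g ^ 2 * waveCoeff f P ^ 2 := by ring
  have hbes : ∑ P : Tile M, waveCoeff f P ^ 2 ≤ ∫ x, f x ^ 2 := bessel hfn hf.supported
  have htrans : ∑ P : Tile M, (waveCoeff f P * tileAvg g P) ^ 2 ≤
      supNorm g ^ 2 * ∫ x, f x ^ 2 :=
    le_trans hsum (mul_le_mul_of_nonneg_left hbes (sq_nonneg _))
  calc Real.sqrt (∑ P : Tile M, (waveCoeff f P * tileAvg g P) ^ 2)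
      ≤ Real.sqrt (supNorm g ^ 2 * ∫ x, f x ^ 2) := Real.sqrt_le_sqrt htrans
  _ = supNorm g * Real.sqrt (∫ x, f x ^ 2) := by
      rw [Real.sqrt_mul (sq_nonneg _), Real.sqrt_sq (supNorm_nonneg hgn)]
  _ = supNorm g * l2Norm f := rfl
  _ ≤ 2 * l2Norm f * supNorm g := by
      nlinarith [l2Norm_nonneg f, supNorm_nonneg hgn,
        mul_nonneg (l2Norm_nonneg f) (supNorm_nonneg hgn)]

/-- The low-high paraproduct estimate. -/
lemma paraLH_est {f g : ℝ → ℝ} (hf : IsTestFun M f) (hg : IsTestFun M g) :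
    l2Norm (paraLH M f g) ≤ 2 * l2Norm f * bmoNorm M g := by
  have hfn := hf.nice
  have heq : paraLH M f g = fun x => ∑ P : Tile M,
      (tileAvg f P * waveCoeff g P) * P.haar x := by
    funext x
    simp only [paraLH]
    exact finsum_eq_sum_of_fintype _
  rw [heq, l2Norm_haar_expansion]
  have hcar : ∑ P : Tile M, (tileAvg f P * waveCoeff g P) ^ 2 ≤
      4 * bmoNorm M g ^ 2 * ∫ x, f x ^ 2 := by
    have h1 : ∑ P : Tile M, (tileAvg f P * waveCoeff g P) ^ 2 =
        ∑ P : Tile M, waveCoeff g P ^ 2 * tileAvg f P ^ 2 :=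
      Finset.sum_congr rfl fun P _ => by ring
    rw [h1]
    calc ∑ P : Tile M, waveCoeff g P ^ 2 * tileAvg f P ^ 2
        ≤ 4 * bmoNorm M g ^ 2 * ∫ x in (topTile M).ival, f x ^ 2 :=
          carleson_embedding hfn (fun P => waveCoeff g P ^ 2) (fun P => sq_nonneg _)
            (sq_nonneg (bmoNorm M g)) (fun J => bmo_carleson g J)
    _ = 4 * bmoNorm M g ^ 2 * ∫ x, f x ^ 2 := by
        rw [setIntegral_top_sq hf.supported]
  calc Real.sqrt (∑ P : Tile M, (tileAvg f P * waveCoeff g P) ^ 2)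
      ≤ Real.sqrt (4 * bmoNorm M g ^ 2 * ∫ x, f x ^ 2) := Real.sqrt_le_sqrt hcar
  _ = 2 * bmoNorm M g * Real.sqrt (∫ x, f x ^ 2) := by
      rw [Real.sqrt_mul (by positivity), show (4:ℝ) * bmoNorm M g ^ 2 =
        (2 * bmoNorm M g) ^ 2 by ring, Real.sqrt_sq (by linarith [bmoNorm_nonneg (M := M) g])]
  _ = 2 * l2Norm f * bmoNorm M g := by rw [l2Norm]; ring

/-- The high-high paraproduct estimate. -/
lemma paraHH_est {f g : ℝ → ℝ} (hf : IsTestFun M f) (hg : IsTestFun M g) :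
    l2Norm (paraHH M f g) ≤ 2 * l2Norm f * bmoNorm M g := by
  have hfn := hf.nice
  set F : ℝ → ℝ := fun x => ∑ P : Tile M,
    (waveCoeff f P * waveCoeff g P / P.len) * P.ival.indicator 1 x with hF
  have heq : paraHH M f g = F := by
    funext x
    simp only [paraHH, hF]
    rw [finsum_eq_sum_of_fintype]
    exact Finset.sum_congr rfl fun P _ => by ring
  have hFnice : Nice F := Nice.finsetSum _ _ fun P _ =>
    (Nice.indicator_one P.measurableSet_ival).const_mul _
  have hFsupp : Supported M F := Supported.finsetSum _ _ fun P _ =>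
    Supported.const_mul (fun x hx =>
      Set.indicator_of_notMem (fun hxx => hx (P.ival_subset_base hxx)) _) _
  have hA0 : 0 ≤ ∫ x, F x ^ 2 := integral_sq_nonneg F
  have hkey : ∫ x, F x ^ 2 = ∑ P : Tile M,
      waveCoeff f P * (waveCoeff g P * tileAvg F P) := by
    have h1 : (fun x => F x ^ 2) = fun x => ∑ P : Tile M,
        (waveCoeff f P * waveCoeff g P / P.len) * P.ival.indicator F x := by
      funext x
      have h2 : F x ^ 2 = ∑ P : Tile M,
          ((waveCoeff f P * waveCoeff g P / P.len) * P.ival.indicator 1 x) * F x := by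
        rw [pow_two, ← Finset.sum_mul]
      rw [h2]
      refine Finset.sum_congr rfl fun P _ => ?_
      have h3 : F x * P.ival.indicator (1 : ℝ → ℝ) x = P.ival.indicator F x :=
        congrFun (Tile.mul_indicator_eq (f := F) P.ival) x
      calc ((waveCoeff f P * waveCoeff g P / P.len) * P.ival.indicator 1 x) * F x
          = (waveCoeff f P * waveCoeff g P / P.len) * (F x * P.ival.indicator 1 x) := by ring
      _ = _ := by rw [h3]
    have hint : ∀ P : Tile M, Integrable (fun x =>
        (waveCoeff f P * waveCoeff g P / P.len) * P.ival.indicator F x) := by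
      intro P
      apply Integrable.const_mul
      rw [integrable_indicator_iff P.measurableSet_ival]
      exact hFnice.integrableOn_ival P
    rw [h1, integral_finset_sum _ (fun P _ => hint P)]
    refine Finset.sum_congr rfl fun P _ => ?_
    rw [integral_const_mul, integral_indicator P.measurableSet_ival,
      ← tileAvg_mul_len F P]
    have hgen : ∀ (u v w l : ℝ), l ≠ 0 → u * v / l * (w * l) = u * (v * w) := by
      intro u v w l hl
      field_simp
    exact hgen _ _ _ _ P.len_pos_s11.ne'
  have hCS : ∑ P : Tile M, waveCoeff f P * (waveCoeff g P * tileAvg F P) ≤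
      Real.sqrt (∑ P : Tile M, waveCoeff f P ^ 2) *
        Real.sqrt (∑ P : Tile M, (waveCoeff g P * tileAvg F P) ^ 2) :=
    Real.sum_mul_le_sqrt_mul_sqrt _ _ _
  have hcarl : ∑ P : Tile M, (waveCoeff g P * tileAvg F P) ^ 2 ≤
      4 * bmoNorm M g ^ 2 * ∫ x, F x ^ 2 := by
    have h1 : ∑ P : Tile M, (waveCoeff g P * tileAvg F P) ^ 2 =
        ∑ P : Tile M, waveCoeff g P ^ 2 * tileAvg F P ^ 2 :=
      Finset.sum_congr rfl fun P _ => by ring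
    rw [h1]
    calc ∑ P : Tile M, waveCoeff g P ^ 2 * tileAvg F P ^ 2
        ≤ 4 * bmoNorm M g ^ 2 * ∫ x in (topTile M).ival, F x ^ 2 :=
          carleson_embedding hFnice (fun P => waveCoeff g P ^ 2) (fun P => sq_nonneg _)
            (sq_nonneg (bmoNorm M g)) (fun J => bmo_carleson g J)
    _ = 4 * bmoNorm M g ^ 2 * ∫ x, F x ^ 2 := by
        rw [setIntegral_top_sq hFsupp]
  have hbes : Real.sqrt (∑ P : Tile M, waveCoeff f P ^ 2) ≤ l2Norm f :=
    Real.sqrt_le_sqrt (bessel hfn hf.supported)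
  have hsqrtA : Real.sqrt (∑ P : Tile M, (waveCoeff g P * tileAvg F P) ^ 2) ≤
      2 * bmoNorm M g * Real.sqrt (∫ x, F x ^ 2) := by
    calc Real.sqrt (∑ P : Tile M, (waveCoeff g P * tileAvg F P) ^ 2)
        ≤ Real.sqrt (4 * bmoNorm M g ^ 2 * ∫ x, F x ^ 2) := Real.sqrt_le_sqrt hcarl
    _ = 2 * bmoNorm M g * Real.sqrt (∫ x, F x ^ 2) := by
        rw [Real.sqrt_mul (by positivity), show (4:ℝ) * bmoNorm M g ^ 2 =
          (2 * bmoNorm M g) ^ 2 by ring, Real.sqrt_sq (by linarith [bmoNorm_nonneg (M := M) g])]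
  have hAle : ∫ x, F x ^ 2 ≤ (l2Norm f * (2 * bmoNorm M g)) * Real.sqrt (∫ x, F x ^ 2) := by
    calc ∫ x, F x ^ 2 = ∑ P : Tile M, waveCoeff f P * (waveCoeff g P * tileAvg F P) := hkey
    _ ≤ Real.sqrt (∑ P : Tile M, waveCoeff f P ^ 2) *
        Real.sqrt (∑ P : Tile M, (waveCoeff g P * tileAvg F P) ^ 2) := hCS
    _ ≤ l2Norm f * (2 * bmoNorm M g * Real.sqrt (∫ x, F x ^ 2)) := by
        apply mul_le_mul hbes hsqrtA (Real.sqrt_nonneg _) (l2Norm_nonneg f)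
    _ = (l2Norm f * (2 * bmoNorm M g)) * Real.sqrt (∫ x, F x ^ 2) := by ring
  have hX : l2Norm (paraHH M f g) = Real.sqrt (∫ x, F x ^ 2) := by rw [heq]; rfl
  have hrhs0 : 0 ≤ 2 * l2Norm f * bmoNorm M g :=
    mul_nonneg (mul_nonneg (by norm_num) (l2Norm_nonneg f)) (bmoNorm_nonneg g)
  by_cases hA : Real.sqrt (∫ x, F x ^ 2) = 0
  · rw [hX, hA]; exact hrhs0
  · have hApos : 0 < Real.sqrt (∫ x, F x ^ 2) :=
      lt_of_le_of_ne (Real.sqrt_nonneg _) (Ne.symm hA)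
    have h5 : Real.sqrt (∫ x, F x ^ 2) * Real.sqrt (∫ x, F x ^ 2) ≤
        (l2Norm f * (2 * bmoNorm M g)) * Real.sqrt (∫ x, F x ^ 2) := by
      rw [Real.mul_self_sqrt hA0]; exact hAle
    have h6 : Real.sqrt (∫ x, F x ^ 2) ≤ l2Norm f * (2 * bmoNorm M g) :=
      le_of_mul_le_mul_right h5 hApos
    rw [hX]
    calc Real.sqrt (∫ x, F x ^ 2) ≤ l2Norm f * (2 * bmoNorm M g) := h6
    _ = 2 * l2Norm f * bmoNorm M g := by ring

/-- Corollary 6.2: `L² × BMO → L²` paraproduct estimates. -/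
theorem statement11 :
    ∃ C : ℝ, 0 < C ∧
      ∀ (M : ℕ) (f g : ℝ → ℝ), IsTestFun M f → IsTestFun M g →
        l2Norm (paraHL M f g) ≤ C * l2Norm f * supNorm g ∧
        l2Norm (paraHH M f g) ≤ C * l2Norm f * bmoNorm M g ∧
        l2Norm (paraLH M f g) ≤ C * l2Norm f * bmoNorm M g := by
  exact ⟨2, by norm_num, fun M f g hf hg =>
    ⟨paraHL_est hf hg, paraHH_est hf hg, paraLH_est hf hg⟩⟩

end Dyadic
end
end
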